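/- arXiv:1312.5255 — 4 statements merged into one kernel-verified Lean document; each statement's English description precedes it below -/
import Mathlib

section
/- There exists a constant C > 0, depending only on the dimension d, such that for every weight v on ℝ^d which is not almost everywhere zero and every measurable set E ⊆ ℝ^d one has (∫ |M(χ_E v)(x)/Mv(x)|² v(x) dx)^{1/2} ≤ C v(E)^{1/2}, where the quotient M(χ_E v)/Mv is interpreted as 0 at points where v vanishes outside the closed support of v (note Mv(x) > 0 for every x when v is not a.e. zero). -/
open MeasureTheory Filter Set Metric
open scoped ENNReal Topology NNReal

noncomputable section

/-- The closed axis-parallel cube centered at `c` with half-edge `r` in `ℝ^d`. -/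
def cube {d : ℕ} (c : EuclideanSpace ℝ (Fin d)) (r : ℝ) : Set (EuclideanSpace ℝ (Fin d)) :=
  {y | ∀ i, |y i - c i| ≤ r}

/-- The non-centered Hardy–Littlewood maximal function over axis-parallel cubes,
with values in `ℝ≥0∞`. -/
def maximal {d : ℕ} (f : EuclideanSpace ℝ (Fin d) → ℝ) (x : EuclideanSpace ℝ (Fin d)) : ℝ≥0∞ :=
  ⨆ (c : EuclideanSpace ℝ (Fin d)) (r : ℝ) (_ : 0 < r) (_ : x ∈ cube c r),
    (∫⁻ y in cube c r, (‖f y‖₊ : ℝ≥0∞)) / volume (cube c r)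

/-- The centered Hardy–Littlewood maximal function over axis-parallel cubes. -/
def cmaximal {d : ℕ} (f : EuclideanSpace ℝ (Fin d) → ℝ) (x : EuclideanSpace ℝ (Fin d)) : ℝ≥0∞ :=
  ⨆ (r : ℝ) (_ : 0 < r),
    (∫⁻ y in cube x r, (‖f y‖₊ : ℝ≥0∞)) / volume (cube x r)

variable {d : ℕ}

lemma measurableSet_cube (c : EuclideanSpace ℝ (Fin d)) (r : ℝ) : MeasurableSet (cube c r) := by
  have : cube c r = ⋂ i, {y : EuclideanSpace ℝ (Fin d) | |y i - c i| ≤ r} := by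
    ext y; simp [cube]
  rw [this]
  refine MeasurableSet.iInter fun i => ?_
  have : Measurable fun y : EuclideanSpace ℝ (Fin d) => |y i - c i| := by
    have h1 : Measurable fun y : EuclideanSpace ℝ (Fin d) => y i :=
      (continuous_apply i).measurable.comp ((MeasurableEquiv.toLp 2 (Fin d → ℝ)).symm).measurable
    exact (h1.sub measurable_const).abs
  exact measurableSet_le this measurable_const

lemma mem_cube_self (c : EuclideanSpace ℝ (Fin d)) {r : ℝ} (hr : 0 ≤ r) : c ∈ cube c r := by
  intro i; simpa using hr

lemma volume_cube (c : EuclideanSpace ℝ (Fin d)) {r : ℝ} (hr : 0 ≤ r) :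
    volume (cube c r) = ENNReal.ofReal (2*r) ^ d := by
  have hpre : cube c r = ((MeasurableEquiv.toLp 2 (Fin d → ℝ)).symm) ⁻¹'
      (Set.univ.pi fun i => Icc (c i - r) (c i + r)) := by
    ext y
    simp only [cube, Set.mem_preimage, Set.mem_pi, Set.mem_univ, forall_true_left, mem_Icc,
      Set.mem_setOf_eq]
    have hy : ∀ i, ((MeasurableEquiv.toLp 2 (Fin d → ℝ)).symm) y i = y i := fun _ => rfl
    constructor
    · intro h i; have := h i; rw [abs_le] at this; rw [hy]
      constructor <;> linarith [this.1, this.2]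
    · intro h i; rw [abs_le]; have := h i; rw [hy] at this
      constructor <;> linarith [this.1, this.2]
  rw [hpre, (EuclideanSpace.volume_preserving_symm_measurableEquiv_toLp (Fin d)).measure_preimage
    (MeasurableSet.univ_pi fun i => measurableSet_Icc).nullMeasurableSet]
  rw [volume_pi_pi]
  simp [Real.volume_Icc]
  rw [two_mul]
  rw [ENNReal.ofReal_add hr hr]

lemma le_maximal (f : EuclideanSpace ℝ (Fin d) → ℝ) {x c : EuclideanSpace ℝ (Fin d)} {r : ℝ}
    (hr : 0 < r) (hx : x ∈ cube c r) :
    (∫⁻ y in cube c r, (‖f y‖₊ : ℝ≥0∞)) / volume (cube c r) ≤ maximal f x := by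
  refine le_iSup_of_le c (le_iSup_of_le r ?_)
  rw [iSup_pos hr, iSup_pos hx]

lemma exists_of_lt_maximal {f : EuclideanSpace ℝ (Fin d) → ℝ} {x : EuclideanSpace ℝ (Fin d)}
    {a : ℝ≥0∞} (h : a < maximal f x) :
    ∃ c r, 0 < r ∧ x ∈ cube c r ∧
      a < (∫⁻ y in cube c r, (‖f y‖₊ : ℝ≥0∞)) / volume (cube c r) := by
  rw [maximal, lt_iSup_iff] at h
  obtain ⟨c, h⟩ := h
  rw [lt_iSup_iff] at h
  obtain ⟨r, h⟩ := h
  rw [lt_iSup_iff] at h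
  obtain ⟨hr, h⟩ := h
  rw [lt_iSup_iff] at h
  obtain ⟨hx, h⟩ := h
  exact ⟨c, r, hr, hx, h⟩

lemma maximal_mono {f g : EuclideanSpace ℝ (Fin d) → ℝ}
    (h : ∀ y, (‖f y‖₊ : ℝ≥0∞) ≤ (‖g y‖₊ : ℝ≥0∞)) (x : EuclideanSpace ℝ (Fin d)) :
    maximal f x ≤ maximal g x := by
  refine iSup_mono fun c => iSup_mono fun r => iSup_mono fun hr => iSup_mono fun hx => ?_
  exact ENNReal.div_le_div_right (lintegral_mono fun y => h y) _

lemma abs_coord_le_dist (x y : EuclideanSpace ℝ (Fin d)) (i : Fin d) :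
    |x i - y i| ≤ dist x y := by
  rw [EuclideanSpace.dist_eq]
  rw [← Real.sqrt_sq_eq_abs]
  apply Real.sqrt_le_sqrt
  rw [← sq_abs]
  exact Finset.single_le_sum (f := fun j => dist (x j) (y j) ^ 2)
    (fun j _ => sq_nonneg _) (Finset.mem_univ i) |>.trans_eq' (by rw [Real.dist_eq])

lemma dist_le_of_mem_cube {x y : EuclideanSpace ℝ (Fin d)} {s : ℝ} (hs : 0 ≤ s)
    (h : ∀ i, |x i - y i| ≤ s) : dist x y ≤ s * Real.sqrt d := by
  rw [EuclideanSpace.dist_eq]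
  have : ∑ i, dist (x i) (y i) ^ 2 ≤ ∑ _i : Fin d, s ^ 2 := by
    refine Finset.sum_le_sum fun i _ => ?_
    rw [Real.dist_eq]
    have h1 : 0 ≤ |x i - y i| := abs_nonneg _
    exact sq_le_sq' (by linarith) (h i)
  refine (Real.sqrt_le_sqrt this).trans ?_
  rw [Finset.sum_const, Finset.card_univ, Fintype.card_fin, nsmul_eq_mul,
    Real.sqrt_mul' _ (sq_nonneg s), Real.sqrt_sq hs, mul_comm]

lemma isOpen_lt_maximal (f : EuclideanSpace ℝ (Fin d) → ℝ) (a : ℝ≥0∞) :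
    IsOpen {x | a < maximal f x} := by
  rw [isOpen_iff_mem_nhds]
  intro x hx
  obtain ⟨c, r, hr, hxc, hlt⟩ := exists_of_lt_maximal hx
  -- find r' > r with a * volume (cube c r') < ∫⁻ over cube c r
  set I := ∫⁻ y in cube c r, (‖f y‖₊ : ℝ≥0∞) with hI
  have hvol : ∀ s : ℝ, 0 ≤ s → volume (cube c s) = ENNReal.ofReal (2*s) ^ d :=
    fun s hs => volume_cube c hs
  have hvne : volume (cube c r) ≠ 0 := by
    rw [hvol r hr.le]; positivity
  have hvnt : volume (cube c r) ≠ ⊤ := by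
    rw [hvol r hr.le]; exact (ENNReal.pow_ne_top ENNReal.ofReal_ne_top)
  have hat : a ≠ ⊤ := by
    intro h; rw [h] at hlt; exact (not_top_lt hlt)
  have key : ∃ r' > r, a * volume (cube c r') < I := by
    rcases eq_top_or_lt_top I with hIt | hIf
    · refine ⟨r + 1, by linarith, ?_⟩
      rw [hIt]
      exact ENNReal.mul_lt_top hat.lt_top
        (by rw [hvol _ (by linarith)]; exact (ENNReal.pow_lt_top ENNReal.ofReal_lt_top))
    · have ha : a * volume (cube c r) < I := by
        rwa [← ENNReal.lt_div_iff_mul_lt (Or.inl hvne) (Or.inl hvnt)]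
      have haR : a.toReal * (2*r)^d < I.toReal := by
        have := ENNReal.toReal_strict_mono hIf.ne ha
        rwa [ENNReal.toReal_mul, hvol r hr.le, ENNReal.toReal_pow,
          ENNReal.toReal_ofReal (by linarith)] at this
      have hcont : Tendsto (fun s : ℝ => a.toReal * (2*s)^d) (𝓝[>] r)
          (𝓝 (a.toReal * (2*r)^d)) := by
        apply Tendsto.mono_left _ nhdsWithin_le_nhds
        exact (Continuous.tendsto (by continuity) r)
      have hev : ∀ᶠ s in 𝓝[>] r, a.toReal * (2*s)^d < I.toReal :=
        hcont.eventually_lt_const haR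
      obtain ⟨r', hr'ev, hr'mem⟩ := (hev.and self_mem_nhdsWithin).exists
      refine ⟨r', hr'mem, ?_⟩
      have hr'pos : 0 < r' := hr.trans hr'mem
      rw [hvol r' hr'pos.le]
      calc a * ENNReal.ofReal (2*r') ^ d
          = ENNReal.ofReal (a.toReal * (2*r')^d) := by
            rw [ENNReal.ofReal_mul ENNReal.toReal_nonneg, ENNReal.ofReal_pow (by linarith),
              ENNReal.ofReal_toReal hat]
        _ < I := by
            rw [ENNReal.ofReal_lt_iff_lt_toReal (by positivity) hIf.ne]
            exact hr'ev
  obtain ⟨r', hrr', hkey⟩ := key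
  have hr' : 0 < r' := hr.trans hrr'
  refine Filter.mem_of_superset (Metric.ball_mem_nhds x (by linarith : (0:ℝ) < r' - r)) ?_
  intro y hy
  have hyc : y ∈ cube c r' := by
    intro i
    calc |y i - c i| ≤ |y i - x i| + |x i - c i| := abs_sub_le _ _ _
    _ ≤ dist y x + r := add_le_add (abs_coord_le_dist y x i) (hxc i)
    _ ≤ (r' - r) + r := by linarith [mem_ball.1 hy]
    _ = r' := by ring
  have : a < (∫⁻ y in cube c r', (‖f y‖₊ : ℝ≥0∞)) / volume (cube c r') := by
    rw [ENNReal.lt_div_iff_mul_lt (Or.inl (by rw [hvol r' hr'.le]; positivity))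
      (Or.inl (by rw [hvol r' hr'.le]; exact ENNReal.pow_ne_top ENNReal.ofReal_ne_top))]
    refine hkey.trans_le (lintegral_mono_set fun z hz i => (hz i).trans (by linarith))
  exact lt_of_lt_of_le this (le_maximal f hr' hyc)

lemma measurable_maximal (f : EuclideanSpace ℝ (Fin d) → ℝ) : Measurable (maximal f) := by
  apply measurable_of_Ioi
  intro a
  exact (isOpen_lt_maximal f a).measurableSet

lemma cube_zero_mono {n m : ℝ} (h : n ≤ m) : (cube (0 : EuclideanSpace ℝ (Fin d)) n) ⊆ cube 0 m :=
  fun y hy i => (hy i).trans h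

lemma mem_cube_zero {x : EuclideanSpace ℝ (Fin d)} {R : ℝ} (h : ‖x‖ ≤ R) : x ∈ cube 0 R := by
  intro i
  have h0 : (0 : EuclideanSpace ℝ (Fin d)) i = 0 := rfl
  rw [h0, sub_zero]
  have habs := abs_coord_le_dist x 0 i
  rw [h0, sub_zero] at habs
  calc |x i| ≤ dist x 0 := habs
  _ = ‖x‖ := by rw [dist_zero_right]
  _ ≤ R := h

lemma maximal_pos {v : EuclideanSpace ℝ (Fin d) → ℝ} (hv : AEMeasurable v volume)
    (hvz : ¬ (v =ᵐ[volume] 0)) (x : EuclideanSpace ℝ (Fin d)) :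
    0 < maximal v x := by
  have hw : AEMeasurable (fun y => (‖v y‖₊ : ℝ≥0∞)) volume := hv.enorm
  have hex : ∃ n : ℕ, 0 < ∫⁻ y in cube (0:EuclideanSpace ℝ (Fin d)) n, (‖v y‖₊ : ℝ≥0∞) := by
    by_contra h
    push_neg at h
    simp only [le_zero_iff] at h
    have huniv : (Set.univ : Set (EuclideanSpace ℝ (Fin d))) =
        ⋃ n : ℕ, cube 0 n := by
      ext y
      simp only [Set.mem_univ, Set.mem_iUnion, true_iff]
      obtain ⟨n, hn⟩ := exists_nat_ge ‖y‖
      exact ⟨n, mem_cube_zero hn⟩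
    have : ∫⁻ y, (‖v y‖₊ : ℝ≥0∞) = 0 := by
      rw [← setLIntegral_univ, huniv]
      refine le_antisymm (le_trans (lintegral_iUnion_le _ _) ?_) zero_le
      simp [h]
    have hz : v =ᵐ[volume] 0 := by
      have := (lintegral_eq_zero_iff' hw).1 this
      filter_upwards [this] with y hy
      simpa using hy
    exact hvz hz
  obtain ⟨n, hn⟩ := hex
  set R : ℝ := n + ‖x‖ + 1 with hR
  have hR0 : 0 < R := by positivity
  have h1 : x ∈ cube (0:EuclideanSpace ℝ (Fin d)) R := mem_cube_zero (by simp [hR]; linarith [Nat.cast_nonneg (α := ℝ) n])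
  have h2 : (0:ℝ≥0∞) < ∫⁻ y in cube (0:EuclideanSpace ℝ (Fin d)) R, (‖v y‖₊ : ℝ≥0∞) := by
    refine hn.trans_le (lintegral_mono_set (cube_zero_mono ?_))
    simp [hR]; linarith [norm_nonneg x]
  refine lt_of_lt_of_le ?_ (le_maximal v hR0 h1)
  refine ENNReal.div_pos h2.ne' ?_
  rw [volume_cube _ hR0.le]
  exact ENNReal.pow_ne_top ENNReal.ofReal_ne_top

lemma exists_good_ball (hd : 1 ≤ d) {v : EuclideanSpace ℝ (Fin d) → ℝ}
    {E : Set (EuclideanSpace ℝ (Fin d))} (hE : MeasurableSet E)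
    {l : ℝ≥0∞} {x : EuclideanSpace ℝ (Fin d)}
    (h : l * maximal v x < maximal (E.indicator v) x) :
    ∃ t : ℝ, 0 < t ∧
      (ENNReal.ofReal (2 * Real.sqrt d))⁻¹ ^ d * l *
        (volume.withDensity fun y => (‖v y‖₊ : ℝ≥0∞)) (closedBall x t)
      ≤ (volume.withDensity fun y => (‖v y‖₊ : ℝ≥0∞)) (E ∩ closedBall x t) := by
  set ν := volume.withDensity fun y => (‖v y‖₊ : ℝ≥0∞) with hν
  obtain ⟨c, r, hr, hxc, hlt⟩ := exists_of_lt_maximal h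
  have hsd : (0:ℝ) < Real.sqrt d := Real.sqrt_pos.2 (by exact_mod_cast Nat.lt_of_lt_of_le Nat.zero_lt_one hd)
  have hsd1 : (1:ℝ) ≤ Real.sqrt d := by
    rw [show (1:ℝ) = Real.sqrt 1 by simp]
    exact Real.sqrt_le_sqrt (by exact_mod_cast hd)
  set t : ℝ := 2 * r * Real.sqrt d with htdef
  have ht : 0 < t := by positivity
  refine ⟨t, ht, ?_⟩
  set B := closedBall x t with hB
  have hQB : cube c r ⊆ B := by
    intro y hy
    rw [hB, mem_closedBall]
    refine (dist_le_of_mem_cube (s := 2*r) (by linarith) fun i => ?_)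
    calc |y i - x i| ≤ |y i - c i| + |c i - x i| := abs_sub_le _ _ _
    _ ≤ r + r := by
        refine add_le_add (hy i) ?_
        rw [abs_sub_comm]; exact hxc i
    _ = 2 * r := by ring
  have hBC : B ⊆ cube x t := fun y hy i =>
    (abs_coord_le_dist y x i).trans (mem_closedBall.1 hy)
  set VQ := volume (cube c r) with hVQ
  set VC := volume (cube x t) with hVC
  have hVQval : VQ = ENNReal.ofReal (2*r) ^ d := volume_cube c hr.le
  have hVCval : VC = ENNReal.ofReal (2*t) ^ d := volume_cube x ht.le
  have hVQ0 : VQ ≠ 0 := by rw [hVQval]; positivity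
  have hVQt : VQ ≠ ⊤ := by rw [hVQval]; exact ENNReal.pow_ne_top ENNReal.ofReal_ne_top
  have hVC0 : VC ≠ 0 := by rw [hVCval]; positivity
  have hVCt : VC ≠ ⊤ := by rw [hVCval]; exact ENNReal.pow_ne_top ENNReal.ofReal_ne_top
  have hκ : (ENNReal.ofReal (2 * Real.sqrt d))⁻¹ ^ d = VQ / VC := by
    rw [ENNReal.eq_div_iff hVC0 hVCt, hVQval, hVCval, ← mul_pow]
    congr 1
    rw [← div_eq_mul_inv, ← ENNReal.ofReal_div_of_pos (by positivity)]
    congr 1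
    rw [htdef]
    field_simp
  -- the measure of the ball below the average over the big cube
  have hνB_le : ν B ≤ ∫⁻ y in cube x t, (‖v y‖₊ : ℝ≥0∞) := by
    rw [hν, withDensity_apply _ measurableSet_closedBall]
    exact lintegral_mono_set hBC
  have hmax_v : (∫⁻ y in cube x t, (‖v y‖₊ : ℝ≥0∞)) / VC ≤ maximal v x :=
    le_maximal v ht (mem_cube_self x ht.le)
  have hstep1 : l * maximal v x * VQ < ∫⁻ y in cube c r, (‖E.indicator v y‖₊ : ℝ≥0∞) := by
    rw [← ENNReal.lt_div_iff_mul_lt (Or.inl hVQ0) (Or.inl hVQt)]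
    exact hlt
  have hstep2 : (∫⁻ y in cube c r, (‖E.indicator v y‖₊ : ℝ≥0∞)) ≤ ν (E ∩ B) := by
    have : ∀ y, (‖E.indicator v y‖₊ : ℝ≥0∞) = E.indicator (fun y => (‖v y‖₊ : ℝ≥0∞)) y := by
      intro y
      rw [nnnorm_indicator_eq_indicator_nnnorm]
      by_cases hy : y ∈ E <;> simp [hy]
    calc (∫⁻ y in cube c r, (‖E.indicator v y‖₊ : ℝ≥0∞))
        ≤ ∫⁻ y in B, (‖E.indicator v y‖₊ : ℝ≥0∞) := lintegral_mono_set hQB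
      _ = ∫⁻ y in B, E.indicator (fun y => (‖v y‖₊ : ℝ≥0∞)) y := by
          apply lintegral_congr; exact this
      _ = ∫⁻ y in E ∩ B, (‖v y‖₊ : ℝ≥0∞) := by
          rw [lintegral_indicator hE, Measure.restrict_restrict hE]
      _ = ν (E ∩ B) := by
          rw [hν, withDensity_apply _ (hE.inter measurableSet_closedBall)]
  calc (ENNReal.ofReal (2 * Real.sqrt d))⁻¹ ^ d * l * ν B
      = l * (ν B / VC) * VQ := by
        rw [hκ, div_eq_mul_inv, div_eq_mul_inv]; ring
    _ ≤ l * maximal v x * VQ := by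
        refine mul_le_mul_left (mul_le_mul_right ?_ l) VQ
        exact le_trans (ENNReal.div_le_div_right hνB_le VC) hmax_v
    _ ≤ ν (E ∩ B) := (hstep1.trans_le hstep2).le

lemma weak_type_estimate (hd : 1 ≤ d) {N : ℕ} {τ : ℝ} (hτ : 1 < τ)
    (hN : IsEmpty (Besicovitch.SatelliteConfig (EuclideanSpace ℝ (Fin d)) N τ))
    {v : EuclideanSpace ℝ (Fin d) → ℝ}
    {E : Set (EuclideanSpace ℝ (Fin d))} (hE : MeasurableSet E)
    {l : ℝ≥0∞} (hl0 : l ≠ 0) (hlt : l ≠ ⊤) :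
    (volume.withDensity fun y => (‖v y‖₊ : ℝ≥0∞))
        {x | l * maximal v x < maximal (E.indicator v) x}
      ≤ N * ((ENNReal.ofReal (2 * Real.sqrt d))⁻¹ ^ d * l)⁻¹ *
        (volume.withDensity fun y => (‖v y‖₊ : ℝ≥0∞)) E := by
  set ν := volume.withDensity fun y => (‖v y‖₊ : ℝ≥0∞) with hν
  set κ := (ENNReal.ofReal (2 * Real.sqrt d))⁻¹ ^ d with hκdef
  have hsd : (0:ℝ) < 2 * Real.sqrt d := by
    have : (0:ℝ) < Real.sqrt d := Real.sqrt_pos.2 (by exact_mod_cast Nat.lt_of_lt_of_le Nat.zero_lt_one hd)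
    linarith
  have hκ0 : κ ≠ 0 := by
    rw [hκdef]
    apply pow_ne_zero
    simp [ENNReal.ofReal_ne_top, ENNReal.mul_eq_top]
  have hκt : κ ≠ ⊤ := by
    rw [hκdef]
    exact ENNReal.pow_ne_top (ENNReal.inv_ne_top.2 (ENNReal.ofReal_pos.2 hsd).ne')
  have hκl0 : κ * l ≠ 0 := by simp [hκ0, hl0]
  have hκlt : κ * l ≠ ⊤ := ENNReal.mul_ne_top hκt hlt
  have hN1 : 1 ≤ N := by
    by_contra hcon
    push_neg at hcon
    interval_cases N
    exact hN.false default
  set S := {x | l * maximal v x < maximal (E.indicator v) x} with hS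
  -- choice of good balls
  have hball : ∀ x ∈ S, ∃ t : ℝ, 0 < t ∧
      κ * l * ν (closedBall x t) ≤ ν (E ∩ closedBall x t) := by
    intro x hx
    obtain ⟨t, ht, hineq⟩ := exists_good_ball hd hE (l := l) hx
    exact ⟨t, ht, hineq⟩
  choose! t ht0 htineq using hball
  have hBle : ∀ x ∈ S, ν (closedBall x (t x)) ≤ (κ * l)⁻¹ * ν (E ∩ closedBall x (t x)) := by
    intro x hx
    calc ν (closedBall x (t x)) = (κ * l)⁻¹ * (κ * l * ν (closedBall x (t x))) := by
          rw [← mul_assoc, ENNReal.inv_mul_cancel hκl0 hκlt, one_mul]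
      _ ≤ (κ * l)⁻¹ * ν (E ∩ closedBall x (t x)) :=
          mul_le_mul_right (htineq x hx) _
  -- bound on bounded pieces
  have hmain : ∀ R : ℕ, ν (S ∩ ball 0 R) ≤ N * (κ * l)⁻¹ * ν E := by
    intro R
    by_cases hbig : ∃ x ∈ S ∩ ball 0 R, 2 * R ≤ t x
    · obtain ⟨x, hx, hxt⟩ := hbig
      have hsub : ball (0 : EuclideanSpace ℝ (Fin d)) R ⊆ closedBall x (t x) := by
        intro y hy
        rw [mem_closedBall]
        have h1 : dist y x ≤ dist y 0 + dist 0 x := dist_triangle _ _ _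
        have h2 : dist y 0 < R := mem_ball.1 hy
        have h3 : dist 0 x < R := by rw [dist_comm]; exact mem_ball.1 hx.2
        linarith
      calc ν (S ∩ ball 0 R) ≤ ν (closedBall x (t x)) :=
            measure_mono ((Set.inter_subset_right).trans hsub)
        _ ≤ (κ * l)⁻¹ * ν (E ∩ closedBall x (t x)) := hBle x hx.1
        _ ≤ (κ * l)⁻¹ * ν E := mul_le_mul_right (measure_mono Set.inter_subset_left) _
        _ ≤ N * ((κ * l)⁻¹ * ν E) := le_mul_of_one_le_left zero_le (by exact_mod_cast hN1)
        _ = N * (κ * l)⁻¹ * ν E := by rw [mul_assoc]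
    · push_neg at hbig
      set T := S ∩ ball (0 : EuclideanSpace ℝ (Fin d)) R with hT
      have hRpos : ∀ x ∈ T, t x < 2 * R := hbig
      let pkg : Besicovitch.BallPackage T (EuclideanSpace ℝ (Fin d)) :=
        { c := fun b => (b : EuclideanSpace ℝ (Fin d))
          r := fun b => t b
          rpos := fun b => ht0 b b.2.1
          r_bound := 2 * R
          r_le := fun b => (hRpos b b.2).le }
      obtain ⟨u, hu, hu'⟩ := Besicovitch.exist_disjoint_covering_families hτ hN pkg
      have hTsub : T ⊆ ⋃ i : Fin N, ⋃ j ∈ u i, ball (pkg.c j) (pkg.r j) := by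
        intro x hx
        exact hu' ⟨⟨x, hx⟩, rfl⟩
      calc ν T ≤ ν (⋃ i : Fin N, ⋃ j ∈ u i, ball (pkg.c j) (pkg.r j)) := measure_mono hTsub
        _ ≤ ∑ i : Fin N, ν (⋃ j ∈ u i, ball (pkg.c j) (pkg.r j)) := measure_iUnion_fintype_le _ _
        _ ≤ ∑ _i : Fin N, (κ * l)⁻¹ * ν E := by
            refine Finset.sum_le_sum fun i _ => ?_
            have hcount : (u i).Countable := by
              refine (hu i).countable_of_nonempty_interior fun j _ => ?_
              exact (nonempty_ball.2 (pkg.rpos j)).mono ball_subset_interior_closedBall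
            calc ν (⋃ j ∈ u i, ball (pkg.c j) (pkg.r j))
                ≤ ν (⋃ j ∈ u i, closedBall (pkg.c j) (pkg.r j)) :=
                  measure_mono (Set.iUnion₂_mono fun j _ => ball_subset_closedBall)
              _ ≤ ∑' j : u i, ν (closedBall (pkg.c j) (pkg.r j)) := measure_biUnion_le ν hcount _
              _ ≤ ∑' j : u i, (κ * l)⁻¹ * ν (E ∩ closedBall (pkg.c j) (pkg.r j)) := by
                  refine ENNReal.tsum_le_tsum fun j => ?_
                  exact hBle _ (j : T).2.1
              _ = (κ * l)⁻¹ * ∑' j : u i, ν (E ∩ closedBall (pkg.c j) (pkg.r j)) :=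
                  ENNReal.tsum_mul_left
              _ ≤ (κ * l)⁻¹ * ν E := by
                  refine mul_le_mul_right ?_ _
                  have hdisj : (u i).PairwiseDisjoint
                      fun j => E ∩ closedBall (pkg.c j) (pkg.r j) := by
                    intro j hj k hk hjk
                    refine Disjoint.mono Set.inter_subset_right Set.inter_subset_right ?_
                    exact (hu i) hj hk hjk
                  have heq : ∑' j : u i, ν (E ∩ closedBall (pkg.c j) (pkg.r j))
                      = ν (⋃ j ∈ u i, E ∩ closedBall (pkg.c j) (pkg.r j)) :=
                    (measure_biUnion hcount hdisj
                      fun j _ => hE.inter measurableSet_closedBall).symm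
                  rw [heq]
                  exact measure_mono (Set.iUnion₂_subset fun j _ => Set.inter_subset_left)
        _ = N * (κ * l)⁻¹ * ν E := by
            rw [Finset.sum_const, Finset.card_univ, Fintype.card_fin, nsmul_eq_mul, mul_assoc]
  -- pass to the limit
  have hSU : S = ⋃ n : ℕ, S ∩ ball (0 : EuclideanSpace ℝ (Fin d)) n := by
    ext x
    simp only [Set.mem_iUnion, Set.mem_inter_iff, mem_ball]
    constructor
    · intro hx
      obtain ⟨n, hn⟩ := exists_nat_gt (dist x 0)
      exact ⟨n, hx, hn⟩
    · rintro ⟨n, hx, -⟩; exact hx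
  calc ν S = ν (⋃ n : ℕ, S ∩ ball (0 : EuclideanSpace ℝ (Fin d)) n) := by rw [← hSU]
    _ = ⨆ n : ℕ, ν (S ∩ ball (0 : EuclideanSpace ℝ (Fin d)) n) := by
        apply Directed.measure_iUnion
        apply Monotone.directed_le
        intro a b hab
        exact Set.inter_subset_inter_right _ (Metric.ball_subset_ball (by exact_mod_cast hab))
    _ ≤ N * (κ * l)⁻¹ * ν E := iSup_le hmain


/-- **Lemma.** There is a dimensional constant `C > 0` such that for every weight `v`
(not a.e. zero) and every measurable set `E`,
`(∫ (M(χ_E v)/Mv)² v)^{1/2} ≤ C v(E)^{1/2}`. -/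
theorem lintegral_maximal_indicator_div_maximal_le
    (d : ℕ) (hd : 1 ≤ d) :
    ∃ C : ℝ, 0 < C ∧
      ∀ v : EuclideanSpace ℝ (Fin d) → ℝ, 0 ≤ v → LocallyIntegrable v volume →
        ¬ (v =ᵐ[volume] 0) →
        ∀ E : Set (EuclideanSpace ℝ (Fin d)), MeasurableSet E →
        (∫⁻ x, (maximal (E.indicator v) x / maximal v x) ^ 2 * ENNReal.ofReal (v x))
            ^ (1/2 : ℝ)
          ≤ ENNReal.ofReal C * (∫⁻ x in E, ENNReal.ofReal (v x)) ^ (1/2 : ℝ) := by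
  obtain ⟨N, τ, hτ, hN⟩ :=
    HasBesicovitchCovering.no_satelliteConfig (α := EuclideanSpace ℝ (Fin d))
  set k : ℝ := 4 * N * (2 * Real.sqrt d) ^ d with hk
  have hsd : (0:ℝ) < 2 * Real.sqrt d := by
    have : (0:ℝ) < Real.sqrt d :=
      Real.sqrt_pos.2 (by exact_mod_cast Nat.lt_of_lt_of_le Nat.zero_lt_one hd)
    linarith
  have hk0 : 0 ≤ k := by positivity
  refine ⟨Real.sqrt k + 1, by positivity, ?_⟩
  intro v hv hvloc hvz E hE
  have hvae : AEMeasurable v volume := hvloc.aestronglyMeasurable.aemeasurable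
  set w : EuclideanSpace ℝ (Fin d) → ℝ≥0∞ := fun y => (‖v y‖₊ : ℝ≥0∞) with hw
  have hwv : ∀ y, w y = ENNReal.ofReal (v y) := fun y => Real.enorm_eq_ofReal (hv y)
  have hwae : AEMeasurable w volume := hvae.enorm
  set ν := volume.withDensity w with hν
  set κ := (ENNReal.ofReal (2 * Real.sqrt d))⁻¹ ^ d with hκdef
  have hκt : κ ≠ ⊤ :=
    ENNReal.pow_ne_top (ENNReal.inv_ne_top.2 (ENNReal.ofReal_pos.2 hsd).ne')
  have hκ0 : κ ≠ 0 := by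
    apply pow_ne_zero
    simp [ENNReal.ofReal_ne_top, ENNReal.mul_eq_top]
  set g : EuclideanSpace ℝ (Fin d) → ℝ≥0∞ :=
    fun x => maximal (E.indicator v) x / maximal v x with hg
  have hgmeas : Measurable g := (measurable_maximal _).div (measurable_maximal _)
  have hg1 : ∀ x, g x ≤ 1 := by
    intro x
    refine ENNReal.div_le_of_le_mul ?_
    rw [one_mul]
    refine maximal_mono (fun y => ?_) x
    by_cases hy : y ∈ E <;> simp [Set.indicator, hy]
  -- rewrite both sides through ν
  have hLHS : (∫⁻ x, g x ^ 2 * ENNReal.ofReal (v x)) = ∫⁻ x, g x ^ 2 ∂ν := by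
    rw [hν, lintegral_withDensity_eq_lintegral_mul₀ hwae (hgmeas.pow_const 2).aemeasurable]
    refine lintegral_congr fun x => ?_
    simp only [Pi.mul_apply, hwv x]
    ring
  have hRHS : (∫⁻ x in E, ENNReal.ofReal (v x)) = ν E := by
    rw [hν, withDensity_apply _ hE]
    exact (lintegral_congr fun x => (hwv x).symm)
  rw [hLHS, hRHS]
  -- pointwise dyadic bound
  have hptwise : ∀ x, g x ^ 2 ≤ ∑' n : ℕ,
      ((2:ℝ≥0∞)⁻¹ ^ n) ^ 2 *
        Set.indicator {y | (2:ℝ≥0∞)⁻¹ ^ (n+1) < g y} (fun _ => 1) x := by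
    intro x
    rcases eq_or_ne (g x) 0 with hgx | hgx
    · rw [hgx]; simp
    · classical
      have hex : ∃ n : ℕ, (2:ℝ≥0∞)⁻¹ ^ (n+1) < g x := by
        obtain ⟨n, hn⟩ := ENNReal.exists_inv_two_pow_lt hgx
        refine ⟨n, lt_of_le_of_lt ?_ hn⟩
        calc (2:ℝ≥0∞)⁻¹ ^ (n+1) = 2⁻¹ ^ n * 2⁻¹ := pow_succ _ _
          _ ≤ 2⁻¹ ^ n * 1 := mul_le_mul_right (by norm_num) _
          _ = 2⁻¹ ^ n := mul_one _
      set n₀ := Nat.find hex with hn₀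
      have hspec : (2:ℝ≥0∞)⁻¹ ^ (n₀+1) < g x := Nat.find_spec hex
      have hupper : g x ≤ (2:ℝ≥0∞)⁻¹ ^ n₀ := by
        rcases Nat.eq_zero_or_pos n₀ with h0 | hpos
        · rw [h0, pow_zero]; exact hg1 x
        · obtain ⟨m, hm⟩ := Nat.exists_eq_succ_of_ne_zero hpos.ne'
          rw [hm]
          have hmin := Nat.find_min hex (m := m) (by rw [hn₀] at hm; omega)
          exact not_lt.1 hmin
      refine le_trans ?_ (ENNReal.le_tsum n₀)
      have hind : Set.indicator {y | (2:ℝ≥0∞)⁻¹ ^ (n₀+1) < g y} (fun _ => (1:ℝ≥0∞)) x = 1 := by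
        rw [Set.indicator_of_mem]
        exact hspec
      rw [hind, mul_one]
      exact pow_le_pow_left' hupper 2
  have h2n : ∀ n : ℕ, ((2:ℝ≥0∞)⁻¹ ^ n) * ((2:ℝ≥0∞) ^ n) = 1 := by
    intro n
    rw [← mul_pow, ENNReal.inv_mul_cancel (by norm_num) (by norm_num), one_pow]
  -- weak type per level
  have hlevel : ∀ n : ℕ, ν {y | (2:ℝ≥0∞)⁻¹ ^ (n+1) < g y}
      ≤ N * (κ * (2:ℝ≥0∞)⁻¹ ^ (n+1))⁻¹ * ν E := by
    intro n
    refine le_trans (measure_mono ?_) (weak_type_estimate hd hτ hN hE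
      (l := (2:ℝ≥0∞)⁻¹ ^ (n+1)) (pow_ne_zero _ (ENNReal.inv_ne_zero.2 ENNReal.ofNat_ne_top))
      (ENNReal.pow_ne_top (by simp)))
    intro y hy
    exact ENNReal.mul_lt_of_lt_div hy
  calc (∫⁻ x, g x ^ 2 ∂ν) ^ (1/2 : ℝ)
      ≤ (∑' n : ℕ, ((2:ℝ≥0∞)⁻¹ ^ n) ^ 2 *
          ν {y | (2:ℝ≥0∞)⁻¹ ^ (n+1) < g y}) ^ (1/2 : ℝ) := by
        refine ENNReal.rpow_le_rpow ?_ (by norm_num)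
        refine le_trans (lintegral_mono hptwise) ?_
        rw [lintegral_tsum fun n => ((measurable_const.indicator
          (measurableSet_lt measurable_const hgmeas)).const_mul _).aemeasurable]
        refine ENNReal.tsum_le_tsum fun n => ?_
        rw [lintegral_const_mul _ (measurable_const.indicator
          (measurableSet_lt measurable_const hgmeas))]
        refine mul_le_mul_right ?_ _
        rw [show (fun _ => (1:ℝ≥0∞)) = (1 : EuclideanSpace ℝ (Fin d) → ℝ≥0∞) from rfl,
          lintegral_indicator_one (measurableSet_lt measurable_const hgmeas)]
    _ ≤ ((4:ℝ≥0∞) * N * κ⁻¹ * ν E) ^ (1/2 : ℝ) := by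
        refine ENNReal.rpow_le_rpow ?_ (by norm_num)
        calc ∑' n : ℕ, ((2:ℝ≥0∞)⁻¹ ^ n) ^ 2 * ν {y | (2:ℝ≥0∞)⁻¹ ^ (n+1) < g y}
            ≤ ∑' n : ℕ, (2:ℝ≥0∞)⁻¹ ^ n * (2 * N * κ⁻¹ * ν E) := by
              refine ENNReal.tsum_le_tsum fun n => ?_
              refine le_trans (mul_le_mul_right (hlevel n) _) ?_
              have hinv : ∀ m : ℕ, ((2:ℝ≥0∞)⁻¹ ^ m)⁻¹ = 2 ^ m := by
                intro m; rw [← ENNReal.inv_pow, inv_inv]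
              rw [ENNReal.mul_inv (Or.inl hκ0) (Or.inl hκt), hinv]
              calc ((2:ℝ≥0∞)⁻¹ ^ n) ^ 2 * (N * (κ⁻¹ * 2 ^ (n+1)) * ν E)
                  = ((2:ℝ≥0∞)⁻¹ ^ n * 2 ^ n) * ((2:ℝ≥0∞)⁻¹ ^ n * (2 * N * κ⁻¹ * ν E)) := by
                    rw [pow_succ]; ring
                _ = (2:ℝ≥0∞)⁻¹ ^ n * (2 * N * κ⁻¹ * ν E) := by rw [h2n n, one_mul]
                _ ≤ (2:ℝ≥0∞)⁻¹ ^ n * (2 * N * κ⁻¹ * ν E) := le_rfl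
          _ = (∑' n : ℕ, (2:ℝ≥0∞)⁻¹ ^ n) * (2 * N * κ⁻¹ * ν E) := ENNReal.tsum_mul_right
          _ = (4:ℝ≥0∞) * N * κ⁻¹ * ν E := by
              rw [ENNReal.tsum_geometric, ENNReal.one_sub_inv_two, inv_inv]
              ring
    _ ≤ ENNReal.ofReal (Real.sqrt k + 1) * ν E ^ (1/2 : ℝ) := by
        rw [ENNReal.mul_rpow_of_nonneg _ _ (by norm_num : (0:ℝ) ≤ 1/2)]
        refine mul_le_mul_left ?_ _
        have hκinv : κ⁻¹ = ENNReal.ofReal ((2 * Real.sqrt d) ^ d) := by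
          rw [hκdef, ← ENNReal.inv_pow, inv_inv, ENNReal.ofReal_pow hsd.le]
        have h4N : (4:ℝ≥0∞) * N * κ⁻¹ = ENNReal.ofReal k := by
          rw [hκinv, hk, ENNReal.ofReal_mul (by positivity), ENNReal.ofReal_mul (by norm_num)]
          norm_num
        rw [h4N, ENNReal.ofReal_rpow_of_nonneg hk0 (by norm_num), ← Real.sqrt_eq_rpow]
        exact ENNReal.ofReal_le_ofReal (by linarith)
end
end

section
/- There exists a constant b_d > 0, depending only on the dimension d (a Besicovitch covering constant), such that for every weight v on ℝ^d which is not almost everywhere zero, every f ∈ L¹(v), and every λ > 0, one has v({x ∈ ℝ^d : M̃(fv)(x) > λ M̃v(x)}) ≤ (b_d/λ) ∫ |f(x)| v(x) dx. (When v is not a.e. zero, M̃v(x) > 0 for every x, so the quotient M̃(fv)/M̃v is everywhere defined.) -/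
open MeasureTheory Filter Set Metric
open scoped ENNReal Topology NNReal

noncomputable section

/-- Besicovitch-type weak measure estimate: if every point of `s` carries a closed ball
on which `L · μ(B) ≤ ∫_B g dμ`, then `L · μ(s) ≤ N ∫ g dμ`, where `N` is a Besicovitch
constant of the metric space. -/
lemma besicovitch_weak {α : Type} [MetricSpace α] [SecondCountableTopology α]
    [MeasurableSpace α] [BorelSpace α] {N : ℕ} {τ : ℝ} (hτ : 1 < τ)
    (hN : IsEmpty (Besicovitch.SatelliteConfig α N τ))
    (μ : Measure α) (g : α → ℝ≥0∞) (L : ℝ≥0∞) (s : Set α)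
    (hs : ∀ x ∈ s, ∃ r, 0 < r ∧
      L * μ (Metric.closedBall x r) ≤ ∫⁻ y in Metric.closedBall x r, g y ∂μ) :
    L * μ s ≤ (N : ℝ≥0∞) * ∫⁻ y, g y ∂μ := by
  choose! r hr0 hrle using hs
  have hcover : s = ⋃ n : ℕ, {x ∈ s | r x ≤ n + 1} := by
    ext x
    simp only [mem_iUnion, mem_setOf_eq, mem_sep_iff]
    constructor
    · intro hx
      obtain ⟨n, hn⟩ := exists_nat_ge (r x)
      exact ⟨n, hx, hn.trans (by linarith)⟩
    · rintro ⟨n, hx, -⟩; exact hx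
  have hmono : Monotone fun n : ℕ => {x ∈ s | r x ≤ n + 1} := by
    intro m n hmn x hx
    refine ⟨hx.1, hx.2.trans ?_⟩
    have : (m : ℝ) ≤ n := Nat.cast_le.2 hmn
    linarith
  rw [hcover, (hmono.directed_le).measure_iUnion, ENNReal.mul_iSup]
  refine iSup_le fun n => ?_
  set sn := {x ∈ s | r x ≤ (n : ℝ) + 1} with hsn
  have hsns : sn ⊆ s := fun x hx => hx.1
  let q : Besicovitch.BallPackage sn α :=
    { c := fun x => (x : α)
      r := fun x => r x
      rpos := fun x => hr0 x (hsns x.2)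
      r_bound := n + 1
      r_le := fun x => x.2.2 }
  obtain ⟨t, htd, htc⟩ := Besicovitch.exist_disjoint_covering_families hτ hN q
  have hsub : sn ⊆ ⋃ i : Fin N, ⋃ j ∈ t i, closedBall (q.c j) (q.r j) := by
    intro x hx
    have : x ∈ range q.c := ⟨⟨x, hx⟩, rfl⟩
    obtain ⟨i, hi⟩ := mem_iUnion.1 (htc this)
    obtain ⟨j, hj, hj2⟩ := mem_iUnion₂.1 hi
    exact mem_iUnion.2 ⟨i, mem_iUnion₂.2 ⟨j, hj, ball_subset_closedBall hj2⟩⟩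
  calc L * μ sn ≤ L * μ (⋃ i : Fin N, ⋃ j ∈ t i, closedBall (q.c j) (q.r j)) :=
        mul_le_mul_right (measure_mono hsub) L
    _ ≤ L * ∑ i : Fin N, μ (⋃ j ∈ t i, closedBall (q.c j) (q.r j)) := by
        gcongr; exact measure_iUnion_fintype_le _ _
    _ = ∑ i : Fin N, L * μ (⋃ j ∈ t i, closedBall (q.c j) (q.r j)) := by
        rw [Finset.mul_sum]
    _ ≤ ∑ i : Fin N, ∫⁻ y, g y ∂μ := by
        refine Finset.sum_le_sum fun i _ => ?_
        have hcnt : (t i).Countable :=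
          (htd i).countable_of_nonempty_interior fun j _ =>
            ⟨q.c j, ball_subset_interior_closedBall (mem_ball_self (q.rpos j))⟩
        calc L * μ (⋃ j ∈ t i, closedBall (q.c j) (q.r j))
            ≤ L * ∑' j : t i, μ (closedBall (q.c j) (q.r j)) := by
              gcongr; exact measure_biUnion_le μ hcnt _
          _ = ∑' j : t i, L * μ (closedBall (q.c (j : sn)) (q.r (j : sn))) :=
              ENNReal.tsum_mul_left.symm
          _ ≤ ∑' j : t i, ∫⁻ y in closedBall (q.c (j : sn)) (q.r (j : sn)), g y ∂μ :=
              ENNReal.tsum_le_tsum fun j => hrle _ (hsns (j : sn).2)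
          _ = ∫⁻ y in ⋃ j : t i, closedBall (q.c (j : sn)) (q.r (j : sn)), g y ∂μ := by
              haveI := hcnt.to_subtype
              refine (lintegral_iUnion (fun j => measurableSet_closedBall) ?_ _).symm
              intro j k hjk
              exact htd i j.2 k.2 (fun h => hjk (Subtype.ext h))
          _ ≤ ∫⁻ y, g y ∂μ := setLIntegral_le_lintegral _ _
    _ = (N : ℝ≥0∞) * ∫⁻ y, g y ∂μ := by
        simp [Finset.sum_const, Finset.card_univ]

lemma cube_eq_preimage {d : ℕ} (c : EuclideanSpace ℝ (Fin d)) {r : ℝ} (hr : 0 ≤ r) :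
    cube c r = (MeasurableEquiv.toLp 2 (Fin d → ℝ)).symm ⁻¹'
      (Metric.closedBall ((MeasurableEquiv.toLp 2 (Fin d → ℝ)).symm c) r) := by
  ext y
  simp only [cube, mem_setOf_eq, mem_preimage, Metric.mem_closedBall, dist_pi_le_iff hr]
  constructor
  · intro h i; simpa [Real.dist_eq] using h i
  · intro h i; simpa [Real.dist_eq] using h i

lemma volume_closedBall_pi {d : ℕ} (c : Fin d → ℝ) {r : ℝ} (hr : 0 ≤ r) :
    volume (Metric.closedBall c r) = (ENNReal.ofReal (2 * r)) ^ d := by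
  rw [closedBall_pi _ hr, volume_pi_pi]
  simp [Real.volume_closedBall, two_mul]

/-- **Weak (1,1) bound for `S̃_v f = M̃(fv)/M̃v` with constant independent of `v`.**
There is a Besicovitch constant `b_d > 0` such that for every weight `v` (not a.e.
zero), every `f ∈ L¹(v)` and every `λ > 0`,
`v({M̃(fv) > λ M̃v}) ≤ (b_d/λ) ∫ |f| v`. -/
theorem weak_type_centered_maximal_quotient
    (d : ℕ) (hd : 1 ≤ d) :
    ∃ b : ℝ, 0 < b ∧
      ∀ v : EuclideanSpace ℝ (Fin d) → ℝ, 0 ≤ v → LocallyIntegrable v volume →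
        ¬ (v =ᵐ[volume] 0) →
        ∀ f : EuclideanSpace ℝ (Fin d) → ℝ, Measurable f →
        (∫⁻ x, (‖f x‖₊ : ℝ≥0∞) * ENNReal.ofReal (v x)) < ∞ →
        ∀ lam : ℝ, 0 < lam →
        (∫⁻ x in {x | ENNReal.ofReal lam * cmaximal v x < cmaximal (fun y => f y * v y) x},
            ENNReal.ofReal (v x))
          ≤ ENNReal.ofReal (b / lam) * ∫⁻ x, (‖f x‖₊ : ℝ≥0∞) * ENNReal.ofReal (v x) := by
  obtain ⟨N, τ, hτ, hN⟩ := HasBesicovitchCovering.no_satelliteConfig (α := Fin d → ℝ)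
  refine ⟨(N : ℝ) + 1, by positivity, ?_⟩
  intro v hv hloc _hv0 f hf hI lam hlam
  set e := (MeasurableEquiv.toLp 2 (Fin d → ℝ)).symm with he
  set L := ENNReal.ofReal lam with hL
  have hL0 : L ≠ 0 := by
    simp only [hL, ne_eq, ENNReal.ofReal_eq_zero, not_le]; exact hlam
  have hLtop : L ≠ ∞ := ENNReal.ofReal_ne_top
  have hvm : AEMeasurable v volume := hloc.aestronglyMeasurable.aemeasurable
  set v' := hvm.mk v with hv'def
  have hv' : Measurable v' := hvm.measurable_mk
  have hvae : v =ᵐ[volume] v' := hvm.ae_eq_mk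
  set W : EuclideanSpace ℝ (Fin d) → ℝ≥0∞ := fun x => ENNReal.ofReal (v' x) with hW
  have hWm : Measurable W := ENNReal.measurable_ofReal.comp hv'
  have hWae : (fun x => ENNReal.ofReal (v x)) =ᵐ[volume] W := by
    filter_upwards [hvae] with x hx
    simp [hW, hx]
  set ν := volume.withDensity W with hν
  set μ := ν.map e with hμ
  set G : (Fin d → ℝ) → ℝ≥0∞ := fun z => (‖f (e.symm z)‖₊ : ℝ≥0∞) with hG
  have hGm : Measurable G := (hf.comp e.symm.measurable).nnnorm.coe_nnreal_ennreal
  set Eset := {x | L * cmaximal v x < cmaximal (fun y => f y * v y) x} with hEset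
  -- total integral identification
  have hItot : (∫⁻ z, G z ∂μ) = ∫⁻ x, (‖f x‖₊ : ℝ≥0∞) * ENNReal.ofReal (v x) := by
    rw [hμ, lintegral_map hGm e.measurable, hν,
      lintegral_withDensity_eq_lintegral_mul _ hWm (show Measurable fun a => G (e a) from hGm.comp e.measurable)]
    refine lintegral_congr_ae ?_
    filter_upwards [hvae] with x hx
    simp [hG, hW, hx, mul_comm]
  -- pointwise hypothesis for the covering lemma
  have key : ∀ z ∈ e.symm ⁻¹' Eset, ∃ r, 0 < r ∧
      L * μ (Metric.closedBall z r) ≤ ∫⁻ y in Metric.closedBall z r, G y ∂μ := by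
    intro z hz
    set x := e.symm z with hx
    have hzx : e x = z := e.apply_symm_apply z
    have hmem : L * cmaximal v x < cmaximal (fun y => f y * v y) x := hz
    simp only [cmaximal] at hmem
    rw [lt_iSup_iff] at hmem
    obtain ⟨r, hmem⟩ := hmem
    rw [lt_iSup_iff] at hmem
    obtain ⟨hr, hlt⟩ := hmem
    refine ⟨r, hr, ?_⟩
    set c := volume (cube x r) with hc
    have hcval : c = ENNReal.ofReal (2 * r) ^ d := by
      rw [hc, cube_eq_preimage x hr.le,
        (EuclideanSpace.volume_preserving_symm_measurableEquiv_toLp (Fin d)).measure_preimage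
          measurableSet_closedBall.nullMeasurableSet, volume_closedBall_pi _ hr.le]
    have hc0 : c ≠ 0 := by
      rw [hcval]
      exact pow_ne_zero _ (ENNReal.ofReal_pos.2 (by linarith)).ne'
    have hctop : c ≠ ∞ := by
      rw [hcval]; exact ENNReal.pow_ne_top ENNReal.ofReal_ne_top
    set Jv := ∫⁻ y in cube x r, (‖v y‖₊ : ℝ≥0∞) with hJv
    set Jfv := ∫⁻ y in cube x r, (‖f y * v y‖₊ : ℝ≥0∞) with hJfv
    have h2 : Jv / c ≤ cmaximal v x := by
      rw [cmaximal]
      exact le_iSup_of_le r (le_iSup_of_le hr le_rfl)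
    have h3 : L * Jv ≤ Jfv := by
      have hdiv : (L * Jv) / c < Jfv / c := by
        calc (L * Jv) / c = L * (Jv / c) := by
              rw [div_eq_mul_inv, div_eq_mul_inv, mul_assoc]
          _ ≤ L * cmaximal v x := mul_le_mul_right h2 L
          _ < Jfv / c := hlt
      rw [div_eq_mul_inv, div_eq_mul_inv,
        ENNReal.mul_lt_mul_iff_left (ENNReal.inv_ne_zero.2 hctop) (ENNReal.inv_ne_top.2 hc0)]
        at hdiv
      exact hdiv.le
    have hcubeB : cube x r = e ⁻¹' Metric.closedBall z r := by
      rw [cube_eq_preimage x hr.le, hzx]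
    -- identify μ (closedBall z r) with Jv
    have hmu : μ (Metric.closedBall z r) = Jv := by
      rw [hμ, MeasurableEquiv.map_apply, ← hcubeB, hν,
        withDensity_apply _ (by rw [hcubeB]; exact measurableSet_closedBall.preimage e.measurable)]
      refine lintegral_congr_ae ?_
      filter_upwards [ae_restrict_of_ae hvae] with y hy
      simp only [hW]
      rw [← hy, (by exact Real.enorm_eq_ofReal (hv y) : (‖v y‖₊ : ℝ≥0∞) = ENNReal.ofReal (v y))]
    have hint : (∫⁻ y in Metric.closedBall z r, G y ∂μ) = Jfv := by
      rw [hμ, setLIntegral_map measurableSet_closedBall hGm e.measurable, ← hcubeB, hν,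
        setLIntegral_withDensity_eq_setLIntegral_mul _ hWm (by
          exact (hf.comp e.symm.measurable).nnnorm.coe_nnreal_ennreal.comp e.measurable)
          (by rw [hcubeB]; exact measurableSet_closedBall.preimage e.measurable)]
      refine lintegral_congr_ae ?_
      filter_upwards [ae_restrict_of_ae hvae] with y hy
      simp only [hG, hW, Pi.mul_apply, e.symm_apply_apply]
      rw [nnnorm_mul, ENNReal.coe_mul, (by exact Real.enorm_eq_ofReal (hv y) : (‖v y‖₊ : ℝ≥0∞) = ENNReal.ofReal (v y)), hy, mul_comm]
    rw [hmu, hint]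
    exact h3
  have main := besicovitch_weak hτ hN μ G L (e.symm ⁻¹' Eset) key
  have hμE : μ (e.symm ⁻¹' Eset) = ν Eset := by
    rw [hμ, MeasurableEquiv.map_apply]
    congr 1
  have hLHS : (∫⁻ x in Eset, ENNReal.ofReal (v x)) = ν Eset := by
    rw [hν, withDensity_apply' W Eset]
    exact lintegral_congr_ae (ae_restrict_of_ae hWae)
  rw [hμE, hItot] at main
  set Itot := ∫⁻ x, (‖f x‖₊ : ℝ≥0∞) * ENNReal.ofReal (v x) with hItotdef
  rw [hLHS]
  calc ν Eset ≤ ((N : ℝ≥0∞) * Itot) / L := by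
        rw [ENNReal.le_div_iff_mul_le (Or.inl hL0) (Or.inl hLtop), mul_comm]
        exact main
    _ ≤ (((N : ℝ≥0∞) + 1) * Itot) / L := by gcongr; exact le_self_add
    _ = ENNReal.ofReal (((N : ℝ) + 1) / lam) * Itot := by
        rw [ENNReal.ofReal_div_of_pos hlam]
        have h1 : ENNReal.ofReal ((N : ℝ) + 1) = (N : ℝ≥0∞) + 1 := by
          rw [ENNReal.ofReal_add (by positivity) zero_le_one, ENNReal.ofReal_natCast,
            ENNReal.ofReal_one]
        rw [h1, ← hL, div_eq_mul_inv, div_eq_mul_inv]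
        ring
end
end

section
/- Let w be a weight on ℝ^d and let f be a locally integrable function with supp f ⊆ supp w. Then for every x ∈ ℝ^d one has the pointwise inequality M̃f(x) ≤ M̃w(x) · M̃_w(f w^{−1})(x), where M̃_w g(x) = sup over R > 0 with w(Q(x,R)) > 0 of (1/w(Q(x,R))) ∫_{Q(x,R)} |g(y)| w(y) dy, and f w^{−1} is interpreted as 0 at points where w vanishes. -/
open MeasureTheory Filter Set Metric
open scoped ENNReal Topology NNReal

noncomputable section

/-- The centered maximal operator associated to a weight `w`: the supremum of
`w`-averages of `|g|` over centered cubes of positive `w`-measure. -/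
def wcmaximal {d : ℕ} (w g : EuclideanSpace ℝ (Fin d) → ℝ)
    (x : EuclideanSpace ℝ (Fin d)) : ℝ≥0∞ :=
  ⨆ (r : ℝ) (_ : 0 < r) (_ : 0 < ∫⁻ y in cube x r, ENNReal.ofReal (w y)),
    (∫⁻ y in cube x r, (‖g y‖₊ : ℝ≥0∞) * ENNReal.ofReal (w y)) /
      (∫⁻ y in cube x r, ENNReal.ofReal (w y))

lemma isCompact_cube {d : ℕ} (c : EuclideanSpace ℝ (Fin d)) (r : ℝ) :
    IsCompact (cube c r) := by
  have h : cube c r = (⇑(EuclideanSpace.equiv (Fin d) ℝ)) ⁻¹'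
      (Set.pi Set.univ fun i => Set.Icc (c i - r) (c i + r)) := by
    ext y
    simp only [cube, Set.mem_setOf_eq, Set.mem_preimage, Set.mem_pi, Set.mem_univ,
      forall_true_left]
    constructor
    · intro hy i
      have h2 := abs_le.1 (hy i)
      show y i ∈ Set.Icc (c i - r) (c i + r)
      rw [Set.mem_Icc]
      constructor <;> linarith [h2.1, h2.2]
    · intro hy i
      have h2 : y i ∈ Set.Icc (c i - r) (c i + r) := hy i
      rw [Set.mem_Icc] at h2
      rw [abs_le]
      constructor <;> linarith [h2.1, h2.2]
  rw [h]
  exact ((EuclideanSpace.equiv (Fin d) ℝ).toHomeomorph.isCompact_preimage).2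
    (isCompact_univ_pi fun i => isCompact_Icc)

/-- **Pointwise domination `M̃f ≤ M̃w ⋅ M̃_w(f w⁻¹)`** for `f` supported in the
support of the weight `w`, where `f w⁻¹` is interpreted as `0` where `w` vanishes. -/
theorem cmaximal_le_cmaximal_mul_wcmaximal
    (d : ℕ) (w f : EuclideanSpace ℝ (Fin d) → ℝ)
    (hw0 : 0 ≤ w) (hw : LocallyIntegrable w volume)
    (hf : LocallyIntegrable f volume)
    (hsupp : Function.support f ⊆ Function.support w)
    (x : EuclideanSpace ℝ (Fin d)) :
    cmaximal f x ≤ cmaximal w x * wcmaximal w (fun y => f y / w y) x := by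
  rw [cmaximal]
  refine iSup₂_le fun r hr => ?_
  set Q := cube x r with hQ
  set V := volume Q with hV
  set A := ∫⁻ y in Q, ENNReal.ofReal (w y) with hA
  set I := ∫⁻ y in Q, (‖f y / w y‖₊ : ℝ≥0∞) * ENNReal.ofReal (w y) with hI
  -- pointwise identity for the integrands
  have hpt : ∀ y, (‖f y‖₊ : ℝ≥0∞) = (‖f y / w y‖₊ : ℝ≥0∞) * ENNReal.ofReal (w y) := by
    intro y
    by_cases h : w y = 0
    · have hf0 : f y = 0 := by
        by_contra hfy
        exact (hsupp hfy) h
      simp [hf0, h]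
    · rw [← Real.enorm_eq_ofReal (hw0 y), enorm_eq_nnnorm, ← ENNReal.coe_mul, ← nnnorm_mul,
        div_mul_cancel₀ _ h]
  have hIf : (∫⁻ y in Q, (‖f y‖₊ : ℝ≥0∞)) = I := lintegral_congr fun y => hpt y
  rw [hIf]
  have hAtop : A ≠ ⊤ := by
    have hint : IntegrableOn w Q volume := hw.integrableOn_isCompact (isCompact_cube x r)
    exact hint.lintegral_lt_top.ne
  by_cases hA0 : A = 0
  · -- w vanishes a.e. on Q, hence I = 0
    have hwm : AEMeasurable (fun y => ENNReal.ofReal (w y)) (volume.restrict Q) :=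
      (hw.aestronglyMeasurable.aemeasurable.restrict).ennreal_ofReal
    have hae : (fun y => ENNReal.ofReal (w y)) =ᵐ[volume.restrict Q] 0 :=
      (lintegral_eq_zero_iff' hwm).1 hA0
    have hI0 : I = 0 := by
      rw [hI]
      have : (fun y => (‖f y / w y‖₊ : ℝ≥0∞) * ENNReal.ofReal (w y))
          =ᵐ[volume.restrict Q] 0 := by
        filter_upwards [hae] with y hy
        simp only [Pi.zero_apply] at hy ⊢
        rw [hy, mul_zero]
      rw [lintegral_congr_ae this]
      simp
    simp [hI0]
  · have hApos : 0 < A := pos_iff_ne_zero.2 hA0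
    have key : A / V * (I / A) = I / V := by
      rw [div_eq_mul_inv A V, mul_right_comm, ENNReal.mul_div_cancel hA0 hAtop,
        ← div_eq_mul_inv]
    rw [← key]
    have h1 : A / V ≤ cmaximal w x := by
      have heq : (∫⁻ y in Q, (‖w y‖₊ : ℝ≥0∞)) = A :=
        lintegral_congr fun y => Real.enorm_eq_ofReal (hw0 y)
      rw [cmaximal]
      refine le_iSup_of_le r (le_iSup_of_le hr ?_)
      rw [heq]
    have h2 : I / A ≤ wcmaximal w (fun y => f y / w y) x := by
      rw [wcmaximal]
      exact le_iSup_of_le r (le_iSup_of_le hr (le_iSup_of_le hApos le_rfl))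
    exact mul_le_mul' h1 h2
end
end

section
/- Let w be a weight on ℝ^d satisfying the local A₁ condition M̃w(x) ≤ C₀ w(x) for every x in the support of w. Then for every 1 < p < ∞ there exists a constant C, depending only on C₀, p, and d, such that for every measurable function f with supp f ⊆ supp w one has ∫ (M̃f(x))^p w(x)^{1−p} dx ≤ C ∫ |f(x)|^p w(x)^{1−p} dx, where w^{1−p}(x) is set equal to 0 at points where w(x) = 0; that is, the centered maximal operator M̃ is bounded on L^p(w^{1−p}). -/
open MeasureTheory Filter Set Metric
open scoped ENNReal Topology NNReal

noncomputable section

namespace LocalA1Aux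

variable {α : Type*} [MetricSpace α] [MeasurableSpace α] [BorelSpace α]
  [SecondCountableTopology α]

/-- The centered maximal ratio of two measures over closed balls. -/
def mr (ν μ : Measure α) (x : α) : ℝ≥0∞ :=
  ⨆ (r : ℝ) (_ : 0 < r), ν (closedBall x r) / μ (closedBall x r)

theorem weak (μ ν : Measure α) {N : ℕ} {τ : ℝ} (hτ : 1 < τ)
    (hN : IsEmpty (Besicovitch.SatelliteConfig α N τ)) {t : ℝ≥0∞} (ht0 : t ≠ 0) (htop : t ≠ ∞) :
    μ {x | ∃ r : ℝ, 0 < r ∧ t * μ (closedBall x r) < ν (closedBall x r)}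
      ≤ N * (ν univ / t) := by
  rcases isEmpty_or_nonempty α with hα | hα
  · simp [Set.eq_empty_of_isEmpty]
  obtain ⟨x₀⟩ := hα
  set s := {x | ∃ r : ℝ, 0 < r ∧ t * μ (closedBall x r) < ν (closedBall x r)} with hs
  set sR : ℕ → Set α := fun R =>
    {x | dist x x₀ ≤ (R : ℝ) ∧ ∃ r : ℝ, 0 < r ∧ r ≤ (R : ℝ)
      ∧ t * μ (closedBall x r) < ν (closedBall x r)} with hsR
  have hmono : Monotone sR := by
    intro a b hab x hx
    obtain ⟨h1, r, hr0, hrle, hlt⟩ := hx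
    have hcast : (a : ℝ) ≤ (b : ℝ) := Nat.cast_le.2 hab
    exact ⟨h1.trans hcast, r, hr0, hrle.trans hcast, hlt⟩
  have hsub : s ⊆ ⋃ R, sR R := by
    rintro x ⟨r, hr0, hlt⟩
    obtain ⟨R, hR⟩ := exists_nat_ge (max (dist x x₀) r)
    exact mem_iUnion.2 ⟨R, (le_max_left _ _).trans hR, r, hr0,
      (le_max_right _ _).trans hR, hlt⟩
  have key : ∀ R : ℕ, μ (sR R) ≤ N * (ν univ / t) := by
    intro R
    have hex : ∀ x : sR R, ∃ r : ℝ, 0 < r ∧ r ≤ (R : ℝ) ∧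
        t * μ (closedBall (x : α) r) < ν (closedBall (x : α) r) := fun x => x.2.2
    choose ρ hρ0 hρR hρ using hex
    let q : Besicovitch.BallPackage (sR R) α :=
      { c := fun x => x, r := ρ, rpos := hρ0, r_bound := R, r_le := hρR }
    obtain ⟨U, hU, hU'⟩ := Besicovitch.exist_disjoint_covering_families hτ hN q
    have hcount : ∀ i, (U i).Countable := by
      intro i
      refine (hU i).countable_of_nonempty_interior fun j _ => ?_
      exact (nonempty_ball.2 (hρ0 j)).mono ball_subset_interior_closedBall
    calc μ (sR R) ≤ μ (⋃ i : Fin N, ⋃ j ∈ U i, ball (q.c j) (q.r j)) := by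
          apply measure_mono
          intro x hx
          exact hU' ⟨⟨x, hx⟩, rfl⟩
      _ ≤ ∑ i : Fin N, μ (⋃ j ∈ U i, ball (q.c j) (q.r j)) := measure_iUnion_fintype_le _ _
      _ ≤ ∑ _i : Fin N, ν univ / t := by
          refine Finset.sum_le_sum fun i _ => ?_
          calc μ (⋃ j ∈ U i, ball (q.c j) (q.r j))
              ≤ μ (⋃ j ∈ U i, closedBall (q.c j) (q.r j)) :=
                measure_mono (iUnion₂_mono fun j _ => ball_subset_closedBall)
            _ ≤ ∑' j : U i, μ (closedBall (q.c ↑j) (q.r ↑j)) :=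
                measure_biUnion_le μ (hcount i) _
            _ ≤ ∑' j : U i, ν (closedBall (q.c ↑j) (q.r ↑j)) / t := by
                refine ENNReal.tsum_le_tsum fun j => ?_
                refine (ENNReal.le_div_iff_mul_le (Or.inl ht0) (Or.inl htop)).2 ?_
                rw [mul_comm]
                exact (hρ ↑j).le
            _ = (∑' j : U i, ν (closedBall (q.c ↑j) (q.r ↑j))) / t := by
                simp only [div_eq_mul_inv, ENNReal.tsum_mul_right]
            _ = ν (⋃ j ∈ U i, closedBall (q.c j) (q.r j)) / t := by
                rw [measure_biUnion (hcount i) (hU i) fun b _ => measurableSet_closedBall]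
            _ ≤ ν univ / t := by
                gcongr
                exact subset_univ _
      _ = N * (ν univ / t) := by
          simp [Finset.sum_const, Finset.card_univ]
  calc μ s ≤ μ (⋃ R, sR R) := measure_mono hsub
    _ = ⨆ R, μ (sR R) := Directed.measure_iUnion hmono.directed_le
    _ ≤ N * (ν univ / t) := iSup_le key

theorem measurable_setLIntegral_closedBall (μ : Measure α) [SigmaFinite μ]
    {g : α → ℝ≥0∞} (hg : Measurable g) (r : ℝ) :
    Measurable fun x => ∫⁻ y in closedBall x r, g y ∂μ := by
  classical
  have h : ∀ x, ∫⁻ y in closedBall x r, g y ∂μ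
      = ∫⁻ y, (if dist y x ≤ r then g y else 0) ∂μ := by
    intro x
    rw [← lintegral_indicator measurableSet_closedBall]
    apply lintegral_congr
    intro y
    rw [Set.indicator_apply]
    simp [mem_closedBall]
  simp_rw [h]
  exact Measurable.lintegral_prod_right'
    (f := fun p : α × α => if dist p.2 p.1 ≤ r then g p.2 else 0)
    (Measurable.ite
      (measurableSet_le (measurable_dist.comp (measurable_snd.prodMk measurable_fst))
        measurable_const)
      (hg.comp measurable_snd) measurable_const)

theorem measurable_measure_closedBall (μ : Measure α) [SigmaFinite μ] (r : ℝ) :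
    Measurable fun x => μ (closedBall x r) := by
  have h : ∀ x : α, μ (closedBall x r) = ∫⁻ y in closedBall x r, 1 ∂μ := by
    simp [setLIntegral_one]
  simp_rw [h]
  exact measurable_setLIntegral_closedBall μ measurable_const r

theorem mr_eq_rat (ν μ : Measure α) (hμ : ∀ (x : α) (r : ℝ), μ (closedBall x r) ≠ ∞) (x : α) :
    mr ν μ x = ⨆ (q : ℚ) (_ : 0 < (q : ℝ)), ν (closedBall x (q : ℝ)) / μ (closedBall x (q : ℝ)) := by
  apply le_antisymm
  · refine iSup₂_le fun r hr => ?_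
    have hne : Nonempty {q : ℚ // r < (q : ℝ)} := by
      obtain ⟨q, hq⟩ := exists_rat_gt r
      exact ⟨⟨q, hq⟩⟩
    have hiInf : μ (closedBall x r) = ⨅ q : {q : ℚ // r < (q : ℝ)}, μ (closedBall x (q : ℝ)) := by
      rw [← Directed.measure_iInter]
      · congr 1
        ext y
        simp only [mem_iInter, mem_closedBall]
        constructor
        · intro h q
          exact h.trans (le_of_lt q.2)
        · intro h
          by_contra hlt
          push_neg at hlt
          obtain ⟨q, hq1, hq2⟩ := exists_rat_btwn hlt
          exact absurd (h ⟨q, hq1⟩) (not_le.2 hq2)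
      · exact fun q => measurableSet_closedBall.nullMeasurableSet
      · intro a b
        have hmin : r < ((min a.1 b.1 : ℚ) : ℝ) := by
          push_cast
          exact lt_min a.2 b.2
        refine ⟨⟨min a.1 b.1, hmin⟩, ?_, ?_⟩
        · refine closedBall_subset_closedBall ?_
          push_cast
          exact min_le_left _ _
        · refine closedBall_subset_closedBall ?_
          push_cast
          exact min_le_right _ _
      · exact ⟨hne.some, hμ x _⟩
    calc ν (closedBall x r) / μ (closedBall x r)
        = ⨆ q : {q : ℚ // r < (q : ℝ)}, ν (closedBall x r) / μ (closedBall x (q : ℝ)) := by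
          rw [hiInf, div_eq_mul_inv, ENNReal.inv_iInf, ENNReal.mul_iSup]
          simp only [div_eq_mul_inv]
      _ ≤ ⨆ (q : ℚ) (_ : 0 < (q : ℝ)), ν (closedBall x (q : ℝ)) / μ (closedBall x (q : ℝ)) := by
          refine iSup_le fun q => ?_
          have hq0 : 0 < ((q : ℚ) : ℝ) := hr.trans q.2
          refine le_iSup₂_of_le q.1 hq0 ?_
          exact ENNReal.div_le_div_right
            (measure_mono (closedBall_subset_closedBall (le_of_lt q.2))) _
  · refine iSup₂_le fun q hq => ?_
    exact le_iSup₂_of_le (q : ℝ) hq le_rfl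

theorem measurable_mr (μ ν : Measure α) [SigmaFinite μ]
    (hμ : ∀ (x : α) (r : ℝ), μ (closedBall x r) ≠ ∞)
    {g : α → ℝ≥0∞} (hg : Measurable g) (hν : ν = μ.withDensity g) :
    Measurable (mr ν μ) := by
  have h : mr ν μ = fun x => ⨆ (q : ℚ) (_ : 0 < (q : ℝ)),
      ν (closedBall x (q : ℝ)) / μ (closedBall x (q : ℝ)) :=
    funext fun x => mr_eq_rat ν μ hμ x
  rw [h]
  refine Measurable.iSup fun q => Measurable.iSup fun _ => Measurable.div ?_
    (measurable_measure_closedBall μ _)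
  have h2 : ∀ x : α, ν (closedBall x (q : ℝ)) = ∫⁻ y in closedBall x (q : ℝ), g y ∂μ :=
    fun x => by rw [hν, withDensity_apply _ measurableSet_closedBall]
  simp_rw [h2]
  exact measurable_setLIntegral_closedBall μ hg _
theorem strong (μ : Measure α) [SigmaFinite μ]
    (hμ : ∀ (x : α) (r : ℝ), μ (closedBall x r) ≠ ∞)
    {N : ℕ} {τ : ℝ} (hτ : 1 < τ) (hN : IsEmpty (Besicovitch.SatelliteConfig α N τ))
    {p : ℝ} (hp : 1 < p) {g : α → ℝ≥0∞} (hg : Measurable g) :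
    ∫⁻ x, mr (μ.withDensity g) μ x ^ p ∂μ
      ≤ ENNReal.ofReal (2 ^ p * p * (p - 1)⁻¹ * N) * ∫⁻ x, g x ^ p ∂μ := by
  classical
  have hp0 : (0:ℝ) < p := lt_trans one_pos hp
  have hp1 : (0:ℝ) < p - 1 := by linarith
  set ν := μ.withDensity g with hν
  set T := mr ν μ with hT
  have hTm : Measurable T := measurable_mr μ ν hμ hg hν
  set K : ℝ≥0∞ := ENNReal.ofReal (2 ^ (p-1) * (p-1)⁻¹) with hK
  have hKR : (0:ℝ) < 2 ^ (p-1) * (p-1)⁻¹ := by positivity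
  have hKpos : K ≠ 0 := by
    rw [hK, Ne, ENNReal.ofReal_eq_zero, not_le]
    exact hKR
  set Gt : ℝ → α → ℝ≥0∞ := fun t x => if ENNReal.ofReal t < 2 * g x then g x else 0 with hGt
  have hGtm : ∀ t, Measurable (Gt t) := fun t =>
    Measurable.ite (measurableSet_lt measurable_const (hg.const_mul 2)) hg measurable_const
  -- weak-type estimate on superlevel sets of T
  have levelset : ∀ t : ℝ, 0 < t →
      μ {a | ENNReal.ofReal t < T a}
        ≤ N * ((∫⁻ x, Gt t x ∂μ) / (ENNReal.ofReal t / 2)) := by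
    intro t ht
    set c := ENNReal.ofReal t with hc
    have hc0 : c ≠ 0 := (ENNReal.ofReal_pos.2 ht).ne'
    have hctop : c ≠ ∞ := ENNReal.ofReal_ne_top
    have hsub : {a | c < T a} ⊆
        {x | ∃ r : ℝ, 0 < r ∧ (c/2) * μ (closedBall x r)
          < (μ.withDensity (Gt t)) (closedBall x r)} := by
      rintro a ha
      simp only [hT, mr, lt_iSup_iff, mem_setOf_eq] at ha
      obtain ⟨r, hr, hlt⟩ := ha
      refine ⟨r, hr, ?_⟩
      have hm_top : μ (closedBall a r) ≠ ∞ := hμ a r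
      have hm0 : μ (closedBall a r) ≠ 0 := by
        intro h0
        have hν0 : ν (closedBall a r) = 0 := by
          rw [hν]
          exact withDensity_absolutelyContinuous μ g h0
        rw [h0, hν0] at hlt
        simp at hlt
      have hνlt : c * μ (closedBall a r) < ν (closedBall a r) :=
        (ENNReal.lt_div_iff_mul_lt (Or.inl hm0) (Or.inl hm_top)).1 hlt
      have hνle : ν (closedBall a r)
          ≤ (μ.withDensity (Gt t)) (closedBall a r) + (c/2) * μ (closedBall a r) := by
        rw [hν, withDensity_apply _ measurableSet_closedBall,
            withDensity_apply _ measurableSet_closedBall]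
        calc ∫⁻ y in closedBall a r, g y ∂μ
            ≤ ∫⁻ y in closedBall a r, (Gt t y + c/2) ∂μ := by
              apply lintegral_mono
              intro y
              by_cases hy : c < 2 * g y
              · simp only [hGt, if_pos (show ENNReal.ofReal t < 2 * g y from hy)]
                exact le_self_add
              · have hy' : g y ≤ c / 2 := by
                  rw [ENNReal.le_div_iff_mul_le (Or.inl two_ne_zero) (Or.inl ENNReal.ofNat_ne_top),
                    mul_comm]
                  exact not_lt.1 hy
                simp only [hGt, if_neg (show ¬ ENNReal.ofReal t < 2 * g y from hy), zero_add]
                exact hy'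
          _ = (∫⁻ y in closedBall a r, Gt t y ∂μ) + (c/2) * μ (closedBall a r) := by
              rw [lintegral_add_left (hGtm t), setLIntegral_const]
      have hmul_top : (c/2) * μ (closedBall a r) ≠ ∞ :=
        ENNReal.mul_ne_top (ne_top_of_le_ne_top hctop ENNReal.half_le_self) hm_top
      have hfin : (c/2) * μ (closedBall a r) + (c/2) * μ (closedBall a r)
          < (μ.withDensity (Gt t)) (closedBall a r) + (c/2) * μ (closedBall a r) := by
        calc (c/2) * μ (closedBall a r) + (c/2) * μ (closedBall a r)
            = c * μ (closedBall a r) := by rw [← add_mul, ENNReal.add_halves]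
          _ < ν (closedBall a r) := hνlt
          _ ≤ _ := hνle
      exact (ENNReal.add_lt_add_iff_right hmul_top).1 hfin
    have hhalf0 : c / 2 ≠ 0 := by
      simp only [Ne, ENNReal.div_eq_zero_iff, not_or]
      exact ⟨hc0, ENNReal.ofNat_ne_top⟩
    have hhalftop : c / 2 ≠ ∞ := ne_top_of_le_ne_top hctop ENNReal.half_le_self
    calc μ {a | c < T a}
        ≤ μ {x | ∃ r : ℝ, 0 < r ∧ (c/2) * μ (closedBall x r)
            < (μ.withDensity (Gt t)) (closedBall x r)} := measure_mono hsub
      _ ≤ N * ((μ.withDensity (Gt t)) univ / (c/2)) := weak μ _ hτ hN hhalf0 hhalftop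
      _ = N * ((∫⁻ x, Gt t x ∂μ) / (c/2)) := by
          rw [withDensity_apply _ MeasurableSet.univ, Measure.restrict_univ]
  -- the inner t-integral bound
  have hinner : ∀ x : α,
      ∫⁻ s in Ioi (0:ℝ), Gt s x * ENNReal.ofReal (s ^ (p-2)) ≤ K * g x ^ p := by
    intro x
    rcases eq_or_ne (g x) 0 with h0 | h0
    · have hz : ∀ s : ℝ, Gt s x * ENNReal.ofReal (s ^ (p-2)) = 0 := by
        intro s
        simp [hGt, h0]
      simp only [hz, lintegral_zero]
      exact zero_le
    rcases eq_or_ne (g x) ∞ with htop | htop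
    · have hrhs : K * g x ^ p = ∞ := by
        rw [htop, ENNReal.top_rpow_of_pos hp0, ENNReal.mul_top hKpos]
      rw [hrhs]
      exact le_top
    · set A := (2 * g x).toReal with hA
      have h2g_top : 2 * g x ≠ ∞ := ENNReal.mul_ne_top ENNReal.ofNat_ne_top htop
      have h2g_0 : 2 * g x ≠ 0 := by simp [h0]
      have hA0 : 0 < A := ENNReal.toReal_pos h2g_0 h2g_top
      have hcongr : ∀ s ∈ Ioi (0:ℝ), Gt s x * ENNReal.ofReal (s ^ (p-2))
          = (Iio A).indicator (fun s => g x * ENNReal.ofReal (s ^ (p-2))) s := by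
        intro s hs
        have hiff : (ENNReal.ofReal s < 2 * g x) ↔ s < A :=
          ENNReal.ofReal_lt_iff_lt_toReal (le_of_lt hs) h2g_top
        simp only [hGt, indicator_apply, mem_Iio]
        by_cases hsA : s < A
        · rw [if_pos (hiff.2 hsA), if_pos hsA]
        · rw [if_neg (fun hh => hsA (hiff.1 hh)), if_neg hsA, zero_mul]
      calc ∫⁻ s in Ioi (0:ℝ), Gt s x * ENNReal.ofReal (s ^ (p-2))
          = ∫⁻ s in Ioi (0:ℝ),
              (Iio A).indicator (fun s => g x * ENNReal.ofReal (s ^ (p-2))) s :=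
            setLIntegral_congr_fun measurableSet_Ioi hcongr
        _ = ∫⁻ s in Ioo (0:ℝ) A, g x * ENNReal.ofReal (s ^ (p-2)) := by
            rw [lintegral_indicator measurableSet_Iio,
              Measure.restrict_restrict measurableSet_Iio, Set.Iio_inter_Ioi]
        _ = g x * ∫⁻ s in Ioo (0:ℝ) A, ENNReal.ofReal (s ^ (p-2)) :=
            lintegral_const_mul' _ _ htop
        _ = g x * ENNReal.ofReal (A ^ (p-1) / (p-1)) := by
            congr 1
            have hint : IntegrableOn (fun s : ℝ => s ^ (p-2)) (Ioo 0 A) volume := by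
              have h1 := intervalIntegral.intervalIntegrable_rpow' (a := 0) (b := A)
                (by linarith : (-1:ℝ) < p - 2)
              rw [intervalIntegrable_iff] at h1
              apply h1.mono_set
              rw [uIoc_of_le hA0.le]
              exact Ioo_subset_Ioc_self
            rw [← ofReal_integral_eq_lintegral_ofReal hint ?_]
            · congr 1
              rw [← integral_Ioc_eq_integral_Ioo, ← intervalIntegral.integral_of_le hA0.le]
              rw [integral_rpow (Or.inl (by linarith : (-1:ℝ) < p - 2))]
              rw [Real.zero_rpow (by linarith : p - 2 + 1 ≠ 0)]
              have he : p - 2 + 1 = p - 1 := by ring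
              rw [he, sub_zero]
            · filter_upwards [self_mem_ae_restrict measurableSet_Ioo] with s hs
              exact Real.rpow_nonneg hs.1.le _
        _ ≤ K * g x ^ p := by
            have h1 : ENNReal.ofReal (A ^ (p-1) / (p-1)) = K * g x ^ (p-1) := by
              rw [div_eq_mul_inv, ENNReal.ofReal_mul (by positivity)]
              have h2 : ENNReal.ofReal (A ^ (p-1)) = (2 : ℝ≥0∞) ^ (p-1) * g x ^ (p-1) := by
                rw [← ENNReal.ofReal_rpow_of_nonneg ENNReal.toReal_nonneg hp1.le]
                rw [ENNReal.ofReal_toReal h2g_top]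
                exact ENNReal.mul_rpow_of_nonneg _ _ hp1.le
              have h3 : ENNReal.ofReal ((2:ℝ) ^ (p-1)) = (2 : ℝ≥0∞) ^ (p-1) := by
                rw [← ENNReal.ofReal_rpow_of_nonneg (by norm_num) hp1.le]
                norm_num
              rw [h2, hK, ENNReal.ofReal_mul (by positivity), h3]
              ring
            rw [h1]
            have h4 : g x * (K * g x ^ (p-1)) = K * g x ^ p := by
              calc g x * (K * g x ^ (p-1)) = K * (g x ^ (1:ℝ) * g x ^ (p-1)) := by
                    rw [ENNReal.rpow_one]; ring
                _ = K * g x ^ p := by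
                    rw [← ENNReal.rpow_add _ _ h0 htop]
                    norm_num
            exact le_of_eq h4
  -- the main estimate for truncations
  have main : ∀ n : ℕ, ∫⁻ x, (min (T x) (n : ℝ≥0∞)) ^ p ∂μ
      ≤ ENNReal.ofReal (2 ^ p * p * (p-1)⁻¹ * N) * ∫⁻ x, g x ^ p ∂μ := by
    intro n
    set fn : α → ℝ := fun x => (min (T x) (n : ℝ≥0∞)).toReal with hfn
    have hfnm : Measurable fn := (hTm.min measurable_const).ennreal_toReal
    have hfn_nn : ∀ x, 0 ≤ fn x := fun x => ENNReal.toReal_nonneg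
    have hlayer : ∫⁻ x, ENNReal.ofReal (∫ s in (0:ℝ)..fn x, p * s ^ (p-1)) ∂μ
        = ∫⁻ s in Ioi (0:ℝ), μ {a | s < fn a} * ENNReal.ofReal (p * s ^ (p-1)) :=
      lintegral_comp_eq_lintegral_meas_lt_mul μ (ae_of_all _ hfn_nn) hfnm.aemeasurable
        (fun s _ => (intervalIntegral.intervalIntegrable_rpow'
          (by linarith : (-1:ℝ) < p - 1)).const_mul p)
        (by
          filter_upwards [self_mem_ae_restrict measurableSet_Ioi] with s hs
          have hs' : (0:ℝ) < s := hs
          positivity)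
    have hLHS : ∀ x, ENNReal.ofReal (∫ s in (0:ℝ)..fn x, p * s ^ (p-1))
        = (min (T x) (n : ℝ≥0∞)) ^ p := by
      intro x
      have hint : ∫ s in (0:ℝ)..fn x, p * s ^ (p-1) = fn x ^ p := by
        rw [intervalIntegral.integral_const_mul, integral_rpow (Or.inl (by linarith))]
        rw [Real.zero_rpow (by linarith : p - 1 + 1 ≠ 0)]
        have he : p - 1 + 1 = p := by ring
        rw [he, sub_zero]
        field_simp
      have hmin_top : min (T x) (n : ℝ≥0∞) ≠ ∞ :=
        ne_top_of_le_ne_top (ENNReal.natCast_ne_top n) (min_le_right _ _)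
      rw [hint, hfn]
      rw [← ENNReal.ofReal_rpow_of_nonneg ENNReal.toReal_nonneg hp0.le]
      rw [ENNReal.ofReal_toReal hmin_top]
    have e1 : ∫⁻ x, (min (T x) (n : ℝ≥0∞)) ^ p ∂μ
        = ∫⁻ s in Ioi (0:ℝ), μ {a | s < fn a} * ENNReal.ofReal (p * s ^ (p-1)) := by
      rw [← hlayer]
      exact lintegral_congr fun x => (hLHS x).symm
    rw [e1]
    have hsbound : ∀ s ∈ Ioi (0:ℝ),
        μ {a | s < fn a} * ENNReal.ofReal (p * s ^ (p-1))
          ≤ ((2:ℝ≥0∞) * N * ENNReal.ofReal p)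
            * ((∫⁻ x, Gt s x ∂μ) * ENNReal.ofReal (s ^ (p-2))) := by
      intro s hs
      have hs' : (0:ℝ) < s := hs
      set c := ENNReal.ofReal s with hc
      have hc0 : c ≠ 0 := (ENNReal.ofReal_pos.2 hs').ne'
      have hctop : c ≠ ∞ := ENNReal.ofReal_ne_top
      have hμle : μ {a | s < fn a} ≤ μ {a | c < T a} := by
        apply measure_mono
        intro a ha
        have hmin_top : min (T a) (n : ℝ≥0∞) ≠ ∞ :=
          ne_top_of_le_ne_top (ENNReal.natCast_ne_top n) (min_le_right _ _)
        have hlt : c < min (T a) (n : ℝ≥0∞) :=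
          (ENNReal.ofReal_lt_iff_lt_toReal hs'.le hmin_top).2 ha
        exact lt_of_lt_of_le hlt (min_le_left _ _)
      have hofr : ENNReal.ofReal (p * s ^ (p-1))
          = ENNReal.ofReal p * (ENNReal.ofReal (s ^ (p-2)) * c) := by
        rw [hc, ← ENNReal.ofReal_mul (Real.rpow_nonneg hs'.le _),
          ← ENNReal.ofReal_mul hp0.le]
        congr 1
        rw [show p - 1 = p - 2 + 1 by ring, Real.rpow_add hs', Real.rpow_one]
      set X := ∫⁻ x, Gt s x ∂μ with hX
      have hXdiv : X / (c/2) = X * 2 * c⁻¹ := by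
        rw [div_eq_mul_inv,
          ENNReal.inv_div (Or.inl ENNReal.ofNat_ne_top) (Or.inl two_ne_zero),
          div_eq_mul_inv, ← mul_assoc]
      calc μ {a | s < fn a} * ENNReal.ofReal (p * s ^ (p-1))
          ≤ ((N : ℝ≥0∞) * (X / (c/2))) * (ENNReal.ofReal p * (ENNReal.ofReal (s ^ (p-2)) * c)) := by
            rw [hofr]
            exact mul_le_mul' (hμle.trans (levelset s hs')) le_rfl
        _ = ((2:ℝ≥0∞) * N * ENNReal.ofReal p) * (X * ENNReal.ofReal (s ^ (p-2))) * (c⁻¹ * c) := by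
            rw [hXdiv]
            ring
        _ = ((2:ℝ≥0∞) * N * ENNReal.ofReal p) * (X * ENNReal.ofReal (s ^ (p-2))) := by
            rw [ENNReal.inv_mul_cancel hc0 hctop, mul_one]
    have hconst_ne : ((2:ℝ≥0∞) * N * ENNReal.ofReal p) ≠ ∞ :=
      ENNReal.mul_ne_top (ENNReal.mul_ne_top ENNReal.ofNat_ne_top (ENNReal.natCast_ne_top N))
        ENNReal.ofReal_ne_top
    have hswap : ∫⁻ s in Ioi (0:ℝ), ∫⁻ x, Gt s x * ENNReal.ofReal (s ^ (p-2)) ∂μ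
        = ∫⁻ x, (∫⁻ s in Ioi (0:ℝ), Gt s x * ENNReal.ofReal (s ^ (p-2))) ∂μ := by
      apply lintegral_lintegral_swap
      apply Measurable.aemeasurable
      have hm : Measurable fun q : ℝ × α =>
          (if ENNReal.ofReal q.1 < 2 * g q.2 then g q.2 else 0)
            * ENNReal.ofReal (q.1 ^ (p-2)) := by
        apply Measurable.mul
        · exact Measurable.ite
            (measurableSet_lt (ENNReal.measurable_ofReal.comp measurable_fst)
              ((hg.comp measurable_snd).const_mul 2))
            (hg.comp measurable_snd) measurable_const
        · exact (measurable_fst.pow_const (p-2)).ennreal_ofReal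
      exact hm
    calc ∫⁻ s in Ioi (0:ℝ), μ {a | s < fn a} * ENNReal.ofReal (p * s ^ (p-1))
        ≤ ∫⁻ s in Ioi (0:ℝ), ((2:ℝ≥0∞) * N * ENNReal.ofReal p)
            * ((∫⁻ x, Gt s x ∂μ) * ENNReal.ofReal (s ^ (p-2))) := by
          apply lintegral_mono_ae
          filter_upwards [self_mem_ae_restrict measurableSet_Ioi] with s hs
          exact hsbound s hs
      _ = ((2:ℝ≥0∞) * N * ENNReal.ofReal p)
            * ∫⁻ s in Ioi (0:ℝ), (∫⁻ x, Gt s x ∂μ) * ENNReal.ofReal (s ^ (p-2)) :=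
          lintegral_const_mul' _ _ hconst_ne
      _ = ((2:ℝ≥0∞) * N * ENNReal.ofReal p)
            * ∫⁻ s in Ioi (0:ℝ), ∫⁻ x, Gt s x * ENNReal.ofReal (s ^ (p-2)) ∂μ := by
          congr 1
          apply lintegral_congr fun s => ?_
          exact (lintegral_mul_const' _ _ ENNReal.ofReal_ne_top).symm
      _ = ((2:ℝ≥0∞) * N * ENNReal.ofReal p)
            * ∫⁻ x, (∫⁻ s in Ioi (0:ℝ), Gt s x * ENNReal.ofReal (s ^ (p-2))) ∂μ := by
          rw [hswap]
      _ ≤ ((2:ℝ≥0∞) * N * ENNReal.ofReal p) * ∫⁻ x, K * g x ^ p ∂μ :=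
          mul_le_mul' le_rfl (lintegral_mono hinner)
      _ = ((2:ℝ≥0∞) * N * ENNReal.ofReal p * K) * ∫⁻ x, g x ^ p ∂μ := by
          rw [lintegral_const_mul' K _ ENNReal.ofReal_ne_top]
          ring
      _ = ENNReal.ofReal (2 ^ p * p * (p-1)⁻¹ * N) * ∫⁻ x, g x ^ p ∂μ := by
          congr 1
          rw [hK]
          rw [show ((2:ℝ≥0∞)) = ENNReal.ofReal (2:ℝ) by simp]
          rw [show ((N:ℝ≥0∞)) = ENNReal.ofReal (N:ℝ) by simp]
          rw [← ENNReal.ofReal_mul (by norm_num), ← ENNReal.ofReal_mul (by positivity),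
            ← ENNReal.ofReal_mul (by positivity)]
          congr 1
          have h2p : (2:ℝ) ^ p = 2 * 2 ^ (p-1) := by
            have h := Real.rpow_add (show (0:ℝ) < 2 by norm_num) 1 (p-1)
            rw [Real.rpow_one] at h
            have he : (1:ℝ) + (p-1) = p := by ring
            rw [he] at h
            exact h
          rw [h2p]
          ring
  -- pass to the limit
  have hTsup : ∀ x, T x ^ p = ⨆ n : ℕ, (min (T x) (n : ℝ≥0∞)) ^ p := by
    intro x
    rcases eq_or_ne (T x) ∞ with h | h
    · rw [h]
      refine le_antisymm ?_ (iSup_le fun k => ENNReal.rpow_le_rpow le_top hp0.le)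
      have hmin : ∀ k : ℕ, min (⊤:ℝ≥0∞) (k:ℝ≥0∞) = (k:ℝ≥0∞) := fun k => min_eq_right le_top
      simp only [hmin]
      rw [ENNReal.top_rpow_of_pos hp0, ← ENNReal.iSup_natCast]
      refine iSup_mono' fun k => ⟨k, ?_⟩
      rcases Nat.eq_zero_or_pos k with hk | hk
      · simp [hk]
      · calc (k:ℝ≥0∞) = (k:ℝ≥0∞) ^ (1:ℝ) := (ENNReal.rpow_one _).symm
          _ ≤ (k:ℝ≥0∞) ^ p := ENNReal.rpow_le_rpow_of_exponent_le
              (by exact_mod_cast Nat.one_le_cast.2 hk) hp.le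
    · obtain ⟨m, hm⟩ := ENNReal.exists_nat_gt h
      apply le_antisymm
      · exact le_iSup_of_le m (le_of_eq (by rw [min_eq_left hm.le]))
      · exact iSup_le fun k => ENNReal.rpow_le_rpow (min_le_left _ _) hp0.le
  calc ∫⁻ x, T x ^ p ∂μ = ∫⁻ x, ⨆ n : ℕ, (min (T x) (n : ℝ≥0∞)) ^ p ∂μ :=
        lintegral_congr hTsup
    _ = ⨆ n : ℕ, ∫⁻ x, (min (T x) (n : ℝ≥0∞)) ^ p ∂μ := by
        apply lintegral_iSup
        · exact fun k => (hTm.min measurable_const).pow_const p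
        · intro a b hab x
          exact ENNReal.rpow_le_rpow (min_le_min le_rfl (Nat.cast_le.2 hab)) hp0.le
    _ ≤ ENNReal.ofReal (2 ^ p * p * (p-1)⁻¹ * N) * ∫⁻ x, g x ^ p ∂μ := iSup_le main

end LocalA1Aux


open LocalA1Aux in
/-- **Local `A₁` implies the centered maximal operator is bounded on `Lᵖ(w^{1-p})`.**
If `M̃w ≤ C₀ w` everywhere on the support of `w`, then for each `1 < p < ∞` there is a
constant `C` (depending only on `C₀`, `p`, `d`) such that
`∫ (M̃f)^p w^{1-p} ≤ C ∫ |f|^p w^{1-p}` for all `f` supported in `supp w`.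
Here `w^{1-p}` is real `rpow`, so `w(x)^{1-p} = 0` whenever `w(x) = 0`. -/
theorem cmaximal_bounded_on_Lp_dual_weight_of_local_A1
    (d : ℕ) (w : EuclideanSpace ℝ (Fin d) → ℝ)
    (hw0 : 0 ≤ w) (hw : LocallyIntegrable w volume) (C₀ : ℝ)
    (hA1 : ∀ x ∈ Function.support w, cmaximal w x ≤ ENNReal.ofReal (C₀ * w x))
    (p : ℝ) (hp : 1 < p) :
    ∃ C : ℝ, 0 < C ∧
      ∀ f : EuclideanSpace ℝ (Fin d) → ℝ, Measurable f →
        Function.support f ⊆ Function.support w →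
        ∫⁻ x, cmaximal f x ^ p * ENNReal.ofReal (w x ^ (1 - p))
          ≤ ENNReal.ofReal C * ∫⁻ x, (‖f x‖₊ : ℝ≥0∞) ^ p * ENNReal.ofReal (w x ^ (1 - p)) := by
  classical
  have hp0 : (0:ℝ) < p := lt_trans one_pos hp
  set C₁ : ℝ := max C₀ 1 with hC₁
  have hC₁1 : (1:ℝ) ≤ C₁ := le_max_right _ _
  have hC₁0 : (0:ℝ) < C₁ := lt_of_lt_of_le one_pos hC₁1
  obtain ⟨N, τ, hτ, hN⟩ := HasBesicovitchCovering.no_satelliteConfig (α := Fin d → ℝ)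
  set K₂ : ℝ := 2 ^ p * p * (p - 1)⁻¹ * N with hK₂
  have hK₂0 : 0 ≤ K₂ := by
    have h1 : (0:ℝ) < p - 1 := by linarith
    positivity
  refine ⟨C₁ ^ p * K₂ + 1, by positivity, ?_⟩
  intro f hf hsupp
  set L := (MeasurableEquiv.toLp 2 (Fin d → ℝ)).symm with hLdef
  -- cubes are the closed balls of the sup metric
  have hcube_ball : ∀ (x : EuclideanSpace ℝ (Fin d)) (r : ℝ), 0 ≤ r →
      ⇑L ⁻¹' (closedBall (L x) r) = cube x r := by
    intro x r hr
    ext y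
    simp only [mem_preimage, Metric.mem_closedBall, cube, mem_setOf_eq]
    rw [dist_pi_le_iff hr]
    constructor
    · intro h i
      have := h i
      rwa [Real.dist_eq] at this
    · intro h i
      rw [Real.dist_eq]
      exact h i
  -- cubes are compact
  have hcube_compact : ∀ (x : EuclideanSpace ℝ (Fin d)) (r : ℝ), 0 ≤ r →
      IsCompact (cube x r) := by
    intro x r hr
    rw [← hcube_ball x r hr]
    have hCLE : ⇑L = ⇑(PiLp.continuousLinearEquiv 2 ℝ (fun _ : Fin d => ℝ)) := rfl
    rw [hCLE]
    exact ((PiLp.continuousLinearEquiv 2 ℝ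
      (fun _ : Fin d => ℝ)).toHomeomorph.isCompact_preimage).2 (isCompact_closedBall _ _)
  -- coordinate bound and positivity of cube volume
  have hcoord : ∀ (y x : EuclideanSpace ℝ (Fin d)) (i : Fin d), |y i - x i| ≤ dist y x := by
    intro y x i
    rw [EuclideanSpace.dist_eq]
    calc |y i - x i| = Real.sqrt (dist (y i) (x i) ^ 2) := by
          rw [Real.dist_eq, Real.sqrt_sq_eq_abs, abs_abs]
      _ ≤ Real.sqrt (∑ j, dist (y j) (x j) ^ 2) :=
          Real.sqrt_le_sqrt (Finset.single_le_sum
            (f := fun j => dist (y j) (x j) ^ 2) (fun j _ => sq_nonneg _)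
            (Finset.mem_univ i))
  have hball_cube : ∀ (x : EuclideanSpace ℝ (Fin d)) (r : ℝ), ball x r ⊆ cube x r := by
    intro x r y hy i
    exact (hcoord y x i).trans (le_of_lt (mem_ball.1 hy))
  have hvol0 : ∀ (x : EuclideanSpace ℝ (Fin d)) (r : ℝ), 0 < r → volume (cube x r) ≠ 0 :=
    fun x r hr => (lt_of_lt_of_le (measure_ball_pos volume x hr)
      (measure_mono (hball_cube x r))).ne'
  -- the weighted measure μ = w dx
  set μ : Measure (EuclideanSpace ℝ (Fin d)) :=
    volume.withDensity (fun x => ENNReal.ofReal (w x)) with hμdef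
  have hwae : AEMeasurable w volume := hw.aestronglyMeasurable.aemeasurable
  have hμcube : ∀ (x : EuclideanSpace ℝ (Fin d)) (r : ℝ), 0 ≤ r → μ (cube x r) ≠ ∞ := by
    intro x r hr
    have hQmeas : MeasurableSet (cube x r) := (hcube_compact x r hr).isClosed.measurableSet
    rw [hμdef, withDensity_apply _ hQmeas]
    have hint : IntegrableOn w (cube x r) volume :=
      hw.integrableOn_isCompact (hcube_compact x r hr)
    have h2 : ∫⁻ y in cube x r, ENNReal.ofReal (w y) ∂volume
        = ∫⁻ y in cube x r, (‖w y‖₊ : ℝ≥0∞) ∂volume :=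
      lintegral_congr fun y => (Real.enorm_eq_ofReal (hw0 y)).symm
    rw [h2]
    exact ne_of_lt hint.2
  -- the transported measure on the sup-metric model
  set μ' : Measure (Fin d → ℝ) := μ.map L with hμ'def
  have hμ'ball : ∀ (z : Fin d → ℝ) (r : ℝ), μ' (closedBall z r) ≠ ∞ := by
    intro z r
    rcases lt_or_ge r 0 with hr | hr
    · rw [closedBall_eq_empty.2 hr]
      simp
    · rw [hμ'def, MeasurableEquiv.map_apply]
      have hpre : ⇑L ⁻¹' closedBall z r = cube (L.symm z) r := by
        have h := hcube_ball (L.symm z) r hr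
        rwa [MeasurableEquiv.apply_symm_apply] at h
      rw [hpre]
      exact hμcube _ _ hr
  haveI : IsLocallyFiniteMeasure μ' :=
    ⟨fun z => ⟨closedBall z 1, closedBall_mem_nhds z one_pos,
      lt_top_iff_ne_top.2 (hμ'ball z 1)⟩⟩
  -- the density g = |f|/w and its measurable version
  have hf_zero : ∀ x, w x = 0 → f x = 0 := by
    intro x hx
    by_contra hne
    exact (hsupp hne) hx
  set g : EuclideanSpace ℝ (Fin d) → ℝ≥0∞ :=
    fun x => ENNReal.ofReal (|f x| / w x) with hgdef
  have hgvol : AEMeasurable g volume := (hf.abs.aemeasurable.div hwae).ennreal_ofReal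
  have hgae : AEMeasurable g μ := hgvol.mono_ac (withDensity_absolutelyContinuous _ _)
  set g₀ : EuclideanSpace ℝ (Fin d) → ℝ≥0∞ := hgae.mk g with hg₀def
  have hg₀m : Measurable g₀ := hgae.measurable_mk
  have hgg₀ : g =ᵐ[μ] g₀ := hgae.ae_eq_mk
  set ν : Measure (EuclideanSpace ℝ (Fin d)) := μ.withDensity g₀ with hνdef
  have hdens : ∀ x, ENNReal.ofReal (w x) * g x = (‖f x‖₊ : ℝ≥0∞) := by
    intro x
    rw [← enorm_eq_nnnorm, Real.enorm_eq_ofReal_abs, hgdef]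
    rcases eq_or_ne (w x) 0 with h0 | h0
    · rw [hf_zero x h0, h0]
      simp
    · rw [← ENNReal.ofReal_mul (hw0 x)]
      congr 1
      field_simp
  have hνs : ∀ s : Set (EuclideanSpace ℝ (Fin d)), MeasurableSet s →
      ν s = ∫⁻ y in s, (‖f y‖₊ : ℝ≥0∞) ∂volume := by
    intro s hs
    rw [hνdef, withDensity_apply _ hs]
    calc ∫⁻ y in s, g₀ y ∂μ = ∫⁻ y in s, g y ∂μ :=
          lintegral_congr_ae (ae_restrict_of_ae hgg₀.symm)
      _ = ∫⁻ y in s, ((fun x => ENNReal.ofReal (w x)) * g) y ∂volume := by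
          rw [hμdef]
          exact setLIntegral_withDensity_eq_lintegral_mul₀ hwae.ennreal_ofReal hgvol hs
      _ = ∫⁻ y in s, (‖f y‖₊ : ℝ≥0∞) ∂volume :=
          lintegral_congr fun y => hdens y
  -- the transported density on the model space
  set g' : (Fin d → ℝ) → ℝ≥0∞ := fun z => g₀ (L.symm z) with hg'def
  have hg'm : Measurable g' := hg₀m.comp L.symm.measurable
  have hν' : ν.map L = μ'.withDensity g' := by
    refine Measure.ext fun s hs => ?_
    rw [MeasurableEquiv.map_apply, hνdef, withDensity_apply _ (L.measurable hs),
      withDensity_apply _ hs, hμ'def, setLIntegral_map hs hg'm L.measurable]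
    refine lintegral_congr fun y => ?_
    rw [hg'def]
    simp only [MeasurableEquiv.symm_apply_apply]
  set T : (Fin d → ℝ) → ℝ≥0∞ := mr (μ'.withDensity g') μ' with hTdef
  have hTm : Measurable T := measurable_mr μ' (μ'.withDensity g') hμ'ball hg'm rfl
  -- Step A: pointwise domination of cmaximal f by T on the support of w
  have hstepA : ∀ x, w x ≠ 0 → cmaximal f x ≤ ENNReal.ofReal (C₁ * w x) * T (L x) := by
    intro x hx
    refine iSup₂_le fun r hr => ?_
    have hQc := hcube_compact x r hr.le
    have hQmeas : MeasurableSet (cube x r) := hQc.isClosed.measurableSet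
    have hcubeB : (μ'.withDensity g') (closedBall (L x) r) = ν (cube x r) := by
      rw [← hν', MeasurableEquiv.map_apply, hcube_ball x r hr.le]
    have hμB : μ' (closedBall (L x) r) = μ (cube x r) := by
      rw [hμ'def, MeasurableEquiv.map_apply, hcube_ball x r hr.le]
    rw [show (∫⁻ y in cube x r, (‖f y‖₊ : ℝ≥0∞)) = ν (cube x r) from (hνs _ hQmeas).symm]
    rcases eq_or_ne (μ (cube x r)) 0 with hm0 | hm0
    · have hν0 : ν (cube x r) = 0 := by
        rw [hνdef]
        exact withDensity_absolutelyContinuous μ g₀ hm0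
      rw [hν0, ENNReal.zero_div]
      exact zero_le
    · have hmtop : μ (cube x r) ≠ ∞ := hμcube x r hr.le
      have hsplit : ν (cube x r) / volume (cube x r)
          = (ν (cube x r) / μ (cube x r)) * (μ (cube x r) / volume (cube x r)) := by
        rw [div_eq_mul_inv, div_eq_mul_inv, div_eq_mul_inv]
        calc ν (cube x r) * (volume (cube x r))⁻¹
            = ν (cube x r) * ((μ (cube x r))⁻¹ * μ (cube x r)) * (volume (cube x r))⁻¹ := by
              rw [ENNReal.inv_mul_cancel hm0 hmtop, mul_one]
          _ = _ := by ring
      rw [hsplit]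
      have h1 : ν (cube x r) / μ (cube x r) ≤ T (L x) := by
        refine le_iSup₂_of_le r hr (le_of_eq ?_)
        rw [hcubeB, hμB]
      have h2 : μ (cube x r) / volume (cube x r) ≤ ENNReal.ofReal (C₁ * w x) := by
        have hμQ : μ (cube x r) = ∫⁻ y in cube x r, (‖w y‖₊ : ℝ≥0∞) := by
          rw [hμdef, withDensity_apply _ hQmeas]
          exact lintegral_congr fun y => (Real.enorm_eq_ofReal (hw0 y)).symm
        calc μ (cube x r) / volume (cube x r) ≤ cmaximal w x := by
              rw [hμQ]
              exact le_iSup₂_of_le r hr le_rfl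
          _ ≤ ENNReal.ofReal (C₀ * w x) := hA1 x hx
          _ ≤ ENNReal.ofReal (C₁ * w x) := ENNReal.ofReal_le_ofReal
              (mul_le_mul_of_nonneg_right (le_max_left _ _) (hw0 x))
      calc ν (cube x r) / μ (cube x r) * (μ (cube x r) / volume (cube x r))
          ≤ T (L x) * ENNReal.ofReal (C₁ * w x) := mul_le_mul' h1 h2
        _ = ENNReal.ofReal (C₁ * w x) * T (L x) := mul_comm _ _
  -- pointwise bound for the integrand
  have hptw : ∀ x, cmaximal f x ^ p * ENNReal.ofReal (w x ^ (1 - p))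
      ≤ ENNReal.ofReal (C₁ ^ p) * (T (L x) ^ p * ENNReal.ofReal (w x)) := by
    intro x
    rcases eq_or_ne (w x) 0 with h0 | h0
    · rw [h0, Real.zero_rpow (by linarith : (1:ℝ) - p ≠ 0)]
      simp
    · have hwx : 0 < w x := lt_of_le_of_ne (hw0 x) (Ne.symm h0)
      calc cmaximal f x ^ p * ENNReal.ofReal (w x ^ (1 - p))
          ≤ (ENNReal.ofReal (C₁ * w x) * T (L x)) ^ p * ENNReal.ofReal (w x ^ (1 - p)) :=
            mul_le_mul' (ENNReal.rpow_le_rpow (hstepA x h0) hp0.le) le_rfl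
        _ = ENNReal.ofReal (C₁ ^ p) * (T (L x) ^ p * ENNReal.ofReal (w x)) := by
            rw [ENNReal.mul_rpow_of_nonneg _ _ hp0.le,
              ENNReal.ofReal_rpow_of_nonneg (by positivity) hp0.le,
              Real.mul_rpow hC₁0.le hwx.le,
              ENNReal.ofReal_mul (by positivity)]
            have hww : ENNReal.ofReal (w x ^ p) * ENNReal.ofReal (w x ^ (1 - p))
                = ENNReal.ofReal (w x) := by
              rw [← ENNReal.ofReal_mul (by positivity), ← Real.rpow_add hwx]
              have he : p + (1 - p) = 1 := by ring
              rw [he, Real.rpow_one]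
            calc ENNReal.ofReal (C₁ ^ p) * ENNReal.ofReal (w x ^ p) * T (L x) ^ p
                  * ENNReal.ofReal (w x ^ (1 - p))
                = ENNReal.ofReal (C₁ ^ p) * (T (L x) ^ p
                  * (ENNReal.ofReal (w x ^ p) * ENNReal.ofReal (w x ^ (1 - p)))) := by ring
              _ = _ := by rw [hww]
  -- pointwise identity for the right-hand side integrand
  have hgp : ∀ x, ENNReal.ofReal (w x) * g x ^ p
      = (‖f x‖₊ : ℝ≥0∞) ^ p * ENNReal.ofReal (w x ^ (1 - p)) := by
    intro x
    rcases eq_or_ne (w x) 0 with h0 | h0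
    · rw [h0, hf_zero x h0]
      simp [Real.zero_rpow (show (1:ℝ) - p ≠ 0 by linarith)]
    · have hwx : 0 < w x := lt_of_le_of_ne (hw0 x) (Ne.symm h0)
      rw [hgdef, ← enorm_eq_nnnorm, Real.enorm_eq_ofReal_abs,
        ENNReal.ofReal_rpow_of_nonneg (by positivity) hp0.le,
        ENNReal.ofReal_rpow_of_nonneg (abs_nonneg _) hp0.le,
        ← ENNReal.ofReal_mul (hw0 x), ← ENNReal.ofReal_mul (by positivity)]
      congr 1
      rw [Real.div_rpow (abs_nonneg _) (hw0 x), Real.rpow_sub hwx, Real.rpow_one]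
      have hwp : w x ^ p ≠ 0 := (Real.rpow_pos_of_pos hwx p).ne'
      field_simp
  -- final chain
  calc ∫⁻ x, cmaximal f x ^ p * ENNReal.ofReal (w x ^ (1 - p))
      ≤ ∫⁻ x, ENNReal.ofReal (C₁ ^ p) * (T (L x) ^ p * ENNReal.ofReal (w x)) :=
        lintegral_mono hptw
    _ = ENNReal.ofReal (C₁ ^ p) * ∫⁻ x, T (L x) ^ p * ENNReal.ofReal (w x) :=
        lintegral_const_mul' _ _ ENNReal.ofReal_ne_top
    _ = ENNReal.ofReal (C₁ ^ p) * ∫⁻ x, T (L x) ^ p ∂μ := by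
        congr 1
        have hTLm : Measurable fun x => T (L x) := hTm.comp L.measurable
        rw [hμdef, lintegral_withDensity_eq_lintegral_mul₀ hwae.ennreal_ofReal
          (hTLm.pow_const p).aemeasurable]
        exact lintegral_congr fun x => (mul_comm _ _)
    _ = ENNReal.ofReal (C₁ ^ p) * ∫⁻ z, T z ^ p ∂μ' := by
        congr 1
        rw [hμ'def, lintegral_map (hTm.pow_const p) L.measurable]
    _ ≤ ENNReal.ofReal (C₁ ^ p) * (ENNReal.ofReal K₂ * ∫⁻ z, g' z ^ p ∂μ') := by
        refine mul_le_mul' le_rfl ?_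
        rw [hK₂]
        exact strong μ' hμ'ball hτ hN hp hg'm
    _ = ENNReal.ofReal (C₁ ^ p) * (ENNReal.ofReal K₂
          * ∫⁻ x, (‖f x‖₊ : ℝ≥0∞) ^ p * ENNReal.ofReal (w x ^ (1 - p))) := by
        congr 2
        calc ∫⁻ z, g' z ^ p ∂μ' = ∫⁻ x, g₀ x ^ p ∂μ := by
              rw [hμ'def, lintegral_map (hg'm.pow_const p) L.measurable]
              refine lintegral_congr fun x => ?_
              rw [hg'def]
              simp only [MeasurableEquiv.symm_apply_apply]
          _ = ∫⁻ x, g x ^ p ∂μ := by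
              refine lintegral_congr_ae ?_
              filter_upwards [hgg₀] with x hx
              rw [hx]
          _ = ∫⁻ x, ENNReal.ofReal (w x) * g x ^ p := by
              rw [hμdef, lintegral_withDensity_eq_lintegral_mul₀ hwae.ennreal_ofReal
                (hgvol.pow_const p)]
              rfl
          _ = ∫⁻ x, (‖f x‖₊ : ℝ≥0∞) ^ p * ENNReal.ofReal (w x ^ (1 - p)) :=
              lintegral_congr hgp
    _ ≤ ENNReal.ofReal (C₁ ^ p * K₂ + 1)
          * ∫⁻ x, (‖f x‖₊ : ℝ≥0∞) ^ p * ENNReal.ofReal (w x ^ (1 - p)) := by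
        rw [← mul_assoc, ← ENNReal.ofReal_mul (by positivity)]
        exact mul_le_mul' (ENNReal.ofReal_le_ofReal (by linarith)) le_rfl
end
end
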